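/- arXiv:2509.03076 — 3 statements merged into one kernel-verified Lean document; each statement's English description precedes it below -/
import Mathlib

section
/- Let f be a holomorphic self-map of the unit disk D. Then there exist a holomorphic map h : D → D and a sequence of automorphisms γ_n of D such that γ_n^{-1} ∘ f^n converges to h uniformly on compact subsets of D. -/
open Complex Metric Filter Set

/-- Inverse hyperbolic tangent. -/
noncomputable def artanh (t : ℝ) : ℝ := (1/2) * Real.log ((1 + t) / (1 - t))

/-- Poincaré distance on the unit disk. -/
noncomputable def pd (z w : ℂ) : ℝ :=
  artanh ‖(w - z) / (1 - (starRingEnd ℂ) z * w)‖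

/-- Holomorphic self-map of the unit disk. -/
def HolSelfDisk (f : ℂ → ℂ) : Prop :=
  DifferentiableOn ℂ f (ball (0:ℂ) 1) ∧ MapsTo f (ball (0:ℂ) 1) (ball (0:ℂ) 1)

/-- A pair of maps that are mutually inverse holomorphic self-maps of the disk,
i.e. an automorphism of the disk together with its inverse. -/
def IsDiskAutPair (γ γinv : ℂ → ℂ) : Prop :=
  HolSelfDisk γ ∧ HolSelfDisk γinv ∧
  (∀ z ∈ ball (0:ℂ) 1, γinv (γ z) = z) ∧ (∀ z ∈ ball (0:ℂ) 1, γ (γinv z) = z)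

noncomputable def Complex.abs : AbsoluteValue ℂ ℝ :=
  IsAbsoluteValue.toAbsoluteValue (norm : ℂ → ℝ)

lemma Complex.abs_apply (z : ℂ) : Complex.abs z = ‖z‖ := rfl

lemma Complex.norm_eq_abs (z : ℂ) : ‖z‖ = Complex.abs z := rfl

lemma Complex.abs_conj (z : ℂ) : Complex.abs ((starRingEnd ℂ) z) = Complex.abs z :=
  Complex.norm_conj z

lemma Complex.sq_abs (z : ℂ) : Complex.abs z ^ 2 = Complex.normSq z := Complex.sq_norm z

lemma Complex.abs_ofReal (r : ℝ) : Complex.abs (r : ℂ) = |r| := by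
  rw [Complex.abs_apply]; simp

lemma Complex.abs_re_le_abs (z : ℂ) : |z.re| ≤ Complex.abs z := Complex.abs_re_le_norm z

lemma Complex.continuous_abs : Continuous Complex.abs := continuous_norm

lemma Complex.abs_le_abs_of_mapsTo_ball_self {f : ℂ → ℂ} {R : ℝ} {z : ℂ}
    (hd : DifferentiableOn ℂ f (ball 0 R)) (h_maps : MapsTo f (ball 0 R) (ball 0 R))
    (h₀ : f 0 = 0) (hz : Complex.abs z < R) : Complex.abs (f z) ≤ Complex.abs z :=
  Complex.norm_le_norm_of_mapsTo_ball hd (h_maps.mono_right ball_subset_closedBall) h₀ hz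

lemma Complex.abs_deriv_le_one_of_mapsTo_ball {f : ℂ → ℂ} {c : ℂ} {R : ℝ}
    (hd : DifferentiableOn ℂ f (ball c R)) (h_maps : MapsTo f (ball c R) (ball c R))
    (hc : f c = c) (h₀ : 0 < R) : Complex.abs (deriv f c) ≤ 1 :=
  Complex.norm_deriv_le_one_of_mapsTo_ball hd
    (by rw [hc]; exact h_maps.mono_right ball_subset_closedBall) h₀

namespace Straighten

noncomputable def mo (a z : ℂ) : ℂ := (z + a) / (1 + (starRingEnd ℂ) a * z)

lemma key_normSq (b p : ℂ) :
    Complex.normSq (1 - (starRingEnd ℂ) b * p) - Complex.normSq (p - b)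
      = (1 - Complex.normSq b) * (1 - Complex.normSq p) := by
  simp only [Complex.normSq_apply, Complex.sub_re, Complex.sub_im, Complex.mul_re, Complex.mul_im,
    Complex.one_re, Complex.one_im, Complex.conj_re, Complex.conj_im]
  ring

lemma mo_denom_ne {a z : ℂ} (ha : Complex.abs a < 1) (hz : Complex.abs z < 1) :
    1 + (starRingEnd ℂ) a * z ≠ 0 := by
  intro h
  have h1 : (starRingEnd ℂ) a * z = -1 := by linear_combination h
  have := congrArg Complex.abs h1
  rw [map_mul, Complex.abs_conj, map_neg_eq_map] at this
  simp at this
  nlinarith [Complex.abs.nonneg a, Complex.abs.nonneg z]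

lemma mo_abs_lt {a z : ℂ} (ha : Complex.abs a < 1) (hz : Complex.abs z < 1) :
    Complex.abs (mo a z) < 1 := by
  have hd := mo_denom_ne ha hz
  have hkey := key_normSq (-a) z
  have hna : Complex.normSq a < 1 := by
    rw [← Complex.sq_abs]; nlinarith [Complex.abs.nonneg a]
  have hnz : Complex.normSq z < 1 := by
    rw [← Complex.sq_abs]; nlinarith [Complex.abs.nonneg z]
  have hpos : 0 < (1 - Complex.normSq (-a)) * (1 - Complex.normSq z) := by
    rw [Complex.normSq_neg]; nlinarith
  have h2 : Complex.normSq (z - -a) < Complex.normSq (1 - (starRingEnd ℂ) (-a) * z) := by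
    nlinarith [hkey]
  have h3 : z - -a = z + a := by ring
  have h4 : 1 - (starRingEnd ℂ) (-a) * z = 1 + (starRingEnd ℂ) a * z := by
    rw [map_neg]; ring
  rw [h3, h4] at h2
  have h5 : Complex.abs (z + a) < Complex.abs (1 + (starRingEnd ℂ) a * z) := by
    rw [← Complex.sq_abs, ← Complex.sq_abs] at h2
    nlinarith [Complex.abs.nonneg (z + a), Complex.abs.nonneg (1 + (starRingEnd ℂ) a * z)]
  have h6 : 0 < Complex.abs (1 + (starRingEnd ℂ) a * z) := by
    simpa [Complex.abs.pos_iff] using hd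
  rw [mo, map_div₀, div_lt_one h6]
  exact h5

lemma mo_mem {a z : ℂ} (ha : Complex.abs a < 1) (hz : z ∈ ball (0:ℂ) 1) :
    mo a z ∈ ball (0:ℂ) 1 := by
  rw [mem_ball_zero_iff] at hz ⊢
  exact mo_abs_lt ha hz

lemma mo_diff {a : ℂ} (ha : Complex.abs a < 1) :
    DifferentiableOn ℂ (mo a) (ball (0:ℂ) 1) := by
  apply DifferentiableOn.div
  · exact (differentiable_id.add_const a).differentiableOn
  · exact ((differentiable_id.const_mul _).const_add 1).differentiableOn
  · intro z hz
    exact mo_denom_ne ha (mem_ball_zero_iff.mp hz)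

lemma mo_inv {a z : ℂ} (ha : Complex.abs a < 1) (hz : Complex.abs z < 1) :
    mo (-a) (mo a z) = z := by
  have hd1 : 1 + (starRingEnd ℂ) a * z ≠ 0 := mo_denom_ne ha hz
  have h1ca : 1 - (starRingEnd ℂ) a * a ≠ 0 := by
    intro h
    have h2 : (starRingEnd ℂ) a * a = 1 := by linear_combination -h
    have := congrArg Complex.abs h2
    rw [map_mul, Complex.abs_conj] at this
    simp at this
    nlinarith [Complex.abs.nonneg a]
  show ((z + a) / (1 + (starRingEnd ℂ) a * z) + -a) /
      (1 + (starRingEnd ℂ) (-a) * ((z + a) / (1 + (starRingEnd ℂ) a * z))) = z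
  rw [map_neg]
  have h1ca' : 1 - a * (starRingEnd ℂ) a ≠ 0 := by
    intro h; apply h1ca; linear_combination h
  have hden : 1 + (starRingEnd ℂ) a * z + -((starRingEnd ℂ) a * (z + a)) ≠ 0 := by
    intro h; apply h1ca; linear_combination h
  have hu : (z + a) / (1 + (starRingEnd ℂ) a * z) * (1 + (starRingEnd ℂ) a * z) = z + a :=
    div_mul_cancel₀ _ hd1
  have hden2 : 1 + -(starRingEnd ℂ) a * ((z + a) / (1 + (starRingEnd ℂ) a * z)) ≠ 0 := by
    intro h; apply hden
    linear_combination (1 + (starRingEnd ℂ) a * z) * h + (starRingEnd ℂ) a * hu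
  rw [div_eq_iff hden2]
  linear_combination hu
lemma mo_apply_zero (a : ℂ) : mo a 0 = a := by simp [mo]

lemma mo_neg_self (a : ℂ) : mo (-a) a = 0 := by simp [mo]

/-- Schwarz–Pick estimate for holomorphic maps bounded by 1 on the disk. -/
lemma sp {q : ℂ → ℂ} (hd : DifferentiableOn ℂ q (ball (0:ℂ) 1))
    (hb : ∀ w ∈ ball (0:ℂ) 1, Complex.abs (q w) ≤ 1) {z : ℂ} (hz : z ∈ ball (0:ℂ) 1) :
    Complex.abs (q z - q 0) ≤ Complex.abs z * Complex.abs (1 - (starRingEnd ℂ) (q 0) * q z) := by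
  have h0 : (0:ℂ) ∈ ball (0:ℂ) 1 := mem_ball_self one_pos
  set A : ℝ := Complex.abs z with hA
  set B : ℝ := Complex.abs (q z - q 0) with hB
  set c₀ : ℂ := (starRingEnd ℂ) (q 0) * q z with hc₀
  have main : ∀ δ : ℝ, δ ∈ Ioo (0:ℝ) 1 →
      (1 - δ) * B ≤ A * Complex.abs (1 - ((1 - δ : ℝ) : ℂ)^2 * c₀) := by
    intro δ hδ
    set c : ℂ := ((1 - δ : ℝ) : ℂ) with hc
    have hc0 : (0:ℝ) ≤ 1 - δ := by linarith [hδ.2]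
    have hc1 : Complex.abs c < 1 := by
      simp only [hc, Complex.abs_ofReal]
      rw [_root_.abs_of_nonneg hc0]
      linarith [hδ.1]
    set p : ℂ → ℂ := fun w => c * q w with hp
    have hpd : DifferentiableOn ℂ p (ball (0:ℂ) 1) := hd.const_smul c
    have hpb : ∀ w ∈ ball (0:ℂ) 1, Complex.abs (p w) < 1 := by
      intro w hw
      have := hb w hw
      simp only [hp, map_mul]
      calc Complex.abs c * Complex.abs (q w) ≤ Complex.abs c * 1 :=
            mul_le_mul_of_nonneg_left this (Complex.abs.nonneg c)
        _ < 1 := by simpa using hc1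
    set b : ℂ := p 0 with hbdef
    have hb1 : Complex.abs b < 1 := hpb 0 h0
    set F : ℂ → ℂ := fun w => mo (-b) (p w) with hF
    have hFd : DifferentiableOn ℂ F (ball (0:ℂ) 1) := by
      apply (mo_diff (by rwa [map_neg_eq_map])).comp hpd
      intro w hw
      exact mem_ball_zero_iff.mpr (hpb w hw)
    have hFm : MapsTo F (ball (0:ℂ) 1) (ball (0:ℂ) 1) := by
      intro w hw
      exact mem_ball_zero_iff.mpr (mo_abs_lt (by rwa [map_neg_eq_map]) (hpb w hw))
    have hF0 : F 0 = 0 := by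
      show mo (-b) (p 0) = 0
      rw [← hbdef]; exact mo_neg_self b
    have hzlt : Complex.abs z < 1 := mem_ball_zero_iff.mp hz
    have hschwarz := Complex.abs_le_abs_of_mapsTo_ball_self hFd hFm hF0 hzlt
    have hden : 1 + (starRingEnd ℂ) (-b) * p z ≠ 0 :=
      mo_denom_ne (by rwa [map_neg_eq_map]) (hpb z hz)
    have hFzeq : F z = (p z - b) / (1 - (starRingEnd ℂ) b * p z) := by
      show mo (-b) (p z) = _
      rw [mo, map_neg]
      congr 1 <;> ring
    have hFz : Complex.abs (F z) = Complex.abs (p z - b) /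
        Complex.abs (1 - (starRingEnd ℂ) b * p z) := by
      rw [hFzeq, map_div₀]
    rw [hFz] at hschwarz
    have hdenpos : 0 < Complex.abs (1 - (starRingEnd ℂ) b * p z) := by
      have : (1:ℂ) - (starRingEnd ℂ) b * p z ≠ 0 := by
        intro h; apply hden; rw [map_neg]; linear_combination h
      simpa [Complex.abs.pos_iff] using this
    rw [div_le_iff₀ hdenpos] at hschwarz
    have e1 : p z - b = c * (q z - q 0) := by simp only [hp, hbdef]; ring
    have e2 : (1:ℂ) - (starRingEnd ℂ) b * p z = 1 - ((1 - δ:ℝ):ℂ)^2 * c₀ := by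
      simp only [hp, hbdef, map_mul, hc, hc₀]
      rw [Complex.conj_ofReal]
      ring
    rw [e1, e2, map_mul] at hschwarz
    have habsc : Complex.abs c = 1 - δ := by
      simp only [hc, Complex.abs_ofReal]; exact _root_.abs_of_nonneg hc0
    rw [habsc, ← hA, ← hB] at hschwarz
    exact hschwarz
  have cont : Tendsto (fun δ : ℝ => A * Complex.abs (1 - ((1 - δ : ℝ) : ℂ)^2 * c₀)
        - (1 - δ) * B) (nhdsWithin 0 (Ioi 0))
      (nhds (A * Complex.abs (1 - ((1 - (0:ℝ) : ℝ) : ℂ)^2 * c₀) - (1 - (0:ℝ)) * B)) := by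
    apply Tendsto.mono_left _ nhdsWithin_le_nhds
    apply Continuous.tendsto
    apply Continuous.sub
    · apply continuous_const.mul
      apply Complex.continuous_abs.comp
      apply Continuous.sub continuous_const
      apply Continuous.mul _ continuous_const
      apply Continuous.pow
      exact Complex.continuous_ofReal.comp (continuous_const.sub continuous_id)
    · exact (continuous_const.sub continuous_id).mul continuous_const
  have hev : ∀ᶠ δ in nhdsWithin (0:ℝ) (Ioi 0),
      (0:ℝ) ≤ A * Complex.abs (1 - ((1 - δ : ℝ) : ℂ)^2 * c₀) - (1 - δ) * B := by
    filter_upwards [Ioo_mem_nhdsGT_of_mem (by constructor <;> norm_num : (0:ℝ) ∈ Ico 0 1)]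
      with δ hδ
    linarith [main δ hδ]
  have hfin := ge_of_tendsto cont hev
  simp only [sub_zero, Complex.ofReal_one, one_pow, one_mul] at hfin
  linarith [hfin]
lemma qd {g : ℂ → ℂ} (hd : DifferentiableOn ℂ g (ball (0:ℂ) 1)) :
    DifferentiableOn ℂ (dslope g 0) (ball (0:ℂ) 1) :=
  (differentiableOn_dslope (isOpen_ball.mem_nhds (mem_ball_self one_pos))).mpr hd

lemma qb {g : ℂ → ℂ} (hd : DifferentiableOn ℂ g (ball (0:ℂ) 1))
    (hm : MapsTo g (ball (0:ℂ) 1) (ball (0:ℂ) 1)) (h0 : g 0 = 0) :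
    ∀ w ∈ ball (0:ℂ) 1, Complex.abs (dslope g 0 w) ≤ 1 := by
  intro w hw
  have hmaps : MapsTo g (ball (0:ℂ) 1) (ball (g 0) 1) := by rwa [h0]
  simpa [Complex.abs_apply] using Complex.norm_dslope_le_div_of_mapsTo_ball hd (hmaps.mono_right ball_subset_closedBall) hw

lemma gq {g : ℂ → ℂ} (h0 : g 0 = 0) (w : ℂ) : g w = w * dslope g 0 w := by
  rcases eq_or_ne w 0 with rfl | hw
  · simpa using h0
  · rw [dslope_of_ne _ hw, slope_def_field, h0]
    field_simp
    ring

lemma q0 (g : ℂ → ℂ) : dslope g 0 0 = deriv g 0 := dslope_same g 0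

/-- Sharp three-point Schwarz-Pick estimate at the origin. -/
lemma schwarz_sharp {g : ℂ → ℂ} (hd : DifferentiableOn ℂ g (ball (0:ℂ) 1))
    (hm : MapsTo g (ball (0:ℂ) 1) (ball (0:ℂ) 1)) (h0 : g 0 = 0) {z : ℂ}
    (hz : z ∈ ball (0:ℂ) 1) :
    Complex.abs (g z) * (1 + Complex.abs (deriv g 0) * Complex.abs z)
      ≤ Complex.abs z * (Complex.abs (deriv g 0) + Complex.abs z) := by
  set q := dslope g 0 with hq
  have hsp := sp (qd hd) (qb hd hm h0) hz
  set x : ℝ := Complex.abs (q z) with hx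
  set β : ℝ := Complex.abs (q 0) with hβ
  set m : ℝ := Complex.abs z with hm2
  have hm1 : m < 1 := mem_ball_zero_iff.mp hz
  have hm0 : 0 ≤ m := Complex.abs.nonneg z
  have hx1 : x ≤ 1 := qb hd hm h0 z hz
  have hx0 : 0 ≤ x := Complex.abs.nonneg _
  have hβ1 : β ≤ 1 := qb hd hm h0 0 (mem_ball_self one_pos)
  have hβ0 : 0 ≤ β := Complex.abs.nonneg _
  -- the real part quantity
  set R : ℝ := ((starRingEnd ℂ) (q 0) * q z).re with hR
  have hRle : |R| ≤ β * x := by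
    rw [hR]
    calc |((starRingEnd ℂ) (q 0) * q z).re| ≤ Complex.abs ((starRingEnd ℂ) (q 0) * q z) :=
          Complex.abs_re_le_abs _
      _ = β * x := by rw [map_mul, Complex.abs_conj]
  -- squared inequality
  have hx2 : x^2 = Complex.normSq (q z) := Complex.sq_abs _
  have hβ2 : β^2 = Complex.normSq (q 0) := Complex.sq_abs _
  have E1 : Complex.normSq (q z - q 0)
      = Complex.normSq (q z) - 2*R + Complex.normSq (q 0) := by
    simp only [hR, Complex.normSq_apply, Complex.sub_re, Complex.sub_im, Complex.mul_re,
      Complex.mul_im, Complex.conj_re, Complex.conj_im]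
    ring
  have E2 : Complex.normSq (1 - (starRingEnd ℂ) (q 0) * q z)
      = 1 - 2*R + Complex.normSq (q 0) * Complex.normSq (q z) := by
    simp only [hR, Complex.normSq_apply, Complex.sub_re, Complex.sub_im, Complex.mul_re,
      Complex.mul_im, Complex.conj_re, Complex.conj_im, Complex.one_re, Complex.one_im]
    ring
  have hsq : x^2 - 2*R + β^2 ≤ m^2 * (1 - 2*R + β^2 * x^2) := by
    have h1 : Complex.abs (q z - q 0) ^ 2
        ≤ (m * Complex.abs (1 - (starRingEnd ℂ) (q 0) * q z))^2 := by
      apply sq_le_sq' _ hsp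
      nlinarith [Complex.abs.nonneg (q z - q 0), Complex.abs.nonneg
        (1 - (starRingEnd ℂ) (q 0) * q z), hm0]
    rw [mul_pow, Complex.sq_abs (q z - q 0),
      Complex.sq_abs (1 - (starRingEnd ℂ) (q 0) * q z)] at h1
    rw [hx2, hβ2]
    calc Complex.normSq (q z) - 2*R + Complex.normSq (q 0) = Complex.normSq (q z - q 0) := E1.symm
      _ ≤ m^2 * Complex.normSq (1 - (starRingEnd ℂ) (q 0) * q z) := h1
      _ = m^2 * (1 - 2*R + Complex.normSq (q 0) * Complex.normSq (q z)) := by rw [E2]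
  -- conclude x * (1 + β * m) ≤ β + m
  have hxβ : x * β ≤ 1 := by nlinarith
  have hxineq : x * (1 + β * m) ≤ β + m := by
    by_contra hcon
    push_neg at hcon
    have hterm : (0:ℝ) ≤ (1 - m^2) * (β*x - R) := by
      apply mul_nonneg
      · nlinarith
      · linarith [(abs_le.mp hRle).2]
    have hQ : (x*(1+m*β)-(β+m)) * (x*(1-m*β)-(β-m)) ≤ 0 := by nlinarith [hsq, hterm]
    have hf1 : 0 < x*(1+m*β)-(β+m) := by linarith [hcon]
    have hf2 : x*(1-m*β)-(β-m) ≤ 0 := by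
      rcases le_or_gt (x*(1-m*β)-(β-m)) 0 with h | h
      · exact h
      · exact absurd hQ (not_le.mpr (mul_pos hf1 h))
    have hmm : 0 ≤ m * (1 - x*β) := mul_nonneg hm0 (by linarith)
    linarith [hf1, hf2, hmm]
  -- translate back
  have hgz : Complex.abs (g z) = m * x := by
    rw [gq h0 z, map_mul]
  have hderiv : Complex.abs (deriv g 0) = β := by
    rw [hβ, hq, dslope_same]
  rw [hgz, hderiv]
  nlinarith [hxineq, hm0]

/-- If a self-map of the disk fixes 0 with derivative a real `t` close to 1,
it is uniformly close to the identity on smaller disks. -/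
lemma close_id {g : ℂ → ℂ} (hd : DifferentiableOn ℂ g (ball (0:ℂ) 1))
    (hm : MapsTo g (ball (0:ℂ) 1) (ball (0:ℂ) 1)) (h0 : g 0 = 0) {t r : ℝ}
    (ht : deriv g 0 = (t : ℂ)) (ht0 : 0 ≤ t) {z : ℂ}
    (hz : z ∈ ball (0:ℂ) 1) (hzr : Complex.abs z ≤ r) (hr : r < 1) :
    Complex.abs (g z - z) * (1 - r) ≤ 3 * (1 - t) := by
  set q := dslope g 0 with hq
  have hq0 : q 0 = (t : ℂ) := by rw [hq, dslope_same, ht]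
  have ht1 : t ≤ 1 := by
    have := qb hd hm h0 0 (mem_ball_self one_pos)
    rw [← hq, hq0] at this
    rwa [Complex.abs_ofReal, _root_.abs_of_nonneg ht0] at this
  have hsp := sp (qd hd) (qb hd hm h0) hz
  rw [← hq] at hsp
  rw [hq0] at hsp
  set m : ℝ := Complex.abs z with hm2
  have hm1 : m < 1 := mem_ball_zero_iff.mp hz
  have hm0 : 0 ≤ m := Complex.abs.nonneg z
  have hmr : m ≤ r := hzr
  have hr0 : 0 ≤ r := le_trans hm0 hmr
  set X : ℝ := Complex.abs (q z - (t:ℂ)) with hX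
  have hX0 : 0 ≤ X := Complex.abs.nonneg _
  -- |1 - t * q z| ≤ (1 - t^2) + t * X
  have hsplit : Complex.abs (1 - (starRingEnd ℂ) ((t:ℂ)) * q z) ≤ (1 - t^2) + t * X := by
    have he : (1:ℂ) - (starRingEnd ℂ) ((t:ℂ)) * q z
        = (((1 - t^2 : ℝ)) : ℂ) + (t:ℂ) * ((t:ℂ) - q z) := by
      rw [Complex.conj_ofReal]
      push_cast
      ring
    rw [he]
    calc Complex.abs ((((1 - t^2 : ℝ)) : ℂ) + (t:ℂ) * ((t:ℂ) - q z))
        ≤ Complex.abs (((1 - t^2 : ℝ) : ℂ)) + Complex.abs ((t:ℂ) * ((t:ℂ) - q z)) :=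
          Complex.abs.add_le _ _
      _ = |1 - t^2| + t * Complex.abs ((t:ℂ) - q z) := by
          rw [map_mul, Complex.abs_ofReal, Complex.abs_ofReal, _root_.abs_of_nonneg ht0]
      _ = (1 - t^2) + t * X := by
          rw [_root_.abs_of_nonneg (by nlinarith : (0:ℝ) ≤ 1 - t^2), hX, ← Complex.abs.map_neg]
          ring_nf
  have hXineq : X ≤ m * ((1 - t^2) + t * X) :=
    hsp.trans (mul_le_mul_of_nonneg_left hsplit hm0)
  -- X * (1 - r) ≤ 2 * (1 - t)
  have hXr : X * (1 - r) ≤ 2 * (1 - t) := by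
    have h1 : m * t ≤ r := by nlinarith
    have h2 : X * (1 - r) ≤ X * (1 - m*t) := by nlinarith [hX0]
    have h3 : X * (1 - m*t) ≤ m*(1-t^2) := by nlinarith [hXineq]
    have h4 : m*(1-t^2) ≤ 2*(1-t) := by nlinarith
    linarith
  -- |g z - z| ≤ X + (1 - t)
  have hgzz : Complex.abs (g z - z) ≤ X + (1 - t) := by
    have he2 : g z - z = z * ((q z - (t:ℂ)) + (((t - 1 : ℝ)):ℂ)) := by
      rw [gq h0 z]
      push_cast
      ring
    rw [he2, map_mul]
    calc m * Complex.abs ((q z - (t:ℂ)) + (((t - 1 : ℝ)):ℂ))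
        ≤ 1 * (X + |t - 1|) := by
          apply mul_le_mul (le_of_lt hm1) _ (Complex.abs.nonneg _) zero_le_one
          calc Complex.abs ((q z - (t:ℂ)) + (((t - 1 : ℝ)):ℂ))
              ≤ Complex.abs (q z - (t:ℂ)) + Complex.abs (((t - 1 : ℝ):ℂ)) := Complex.abs.add_le _ _
            _ = X + |t - 1| := by rw [Complex.abs_ofReal]
      _ = X + (1 - t) := by rw [abs_of_nonpos (by linarith : t - 1 ≤ 0), one_mul]; ring
  have h5 : Complex.abs (g z - z) * (1 - r) ≤ (X + (1 - t)) * (1 - r) :=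
    mul_le_mul_of_nonneg_right hgzz (by linarith)
  have h6 : (1-t)*(1-r) ≤ 1-t := by nlinarith
  nlinarith [h5, hXr, h6]
lemma mo_zero (z : ℂ) : mo 0 z = z := by simp [mo]

lemma mo_inv' {a z : ℂ} (ha : Complex.abs a < 1) (hz : Complex.abs z < 1) :
    mo a (mo (-a) z) = z := by
  have := mo_inv (a := -a) (by rwa [map_neg_eq_map]) hz
  rwa [neg_neg] at this

lemma hol_comp (g h : ℂ → ℂ) (hg : HolSelfDisk g) (hh : HolSelfDisk h) :
    HolSelfDisk (fun z => g (h z)) :=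
  ⟨hg.1.comp hh.1 hh.2, fun _ hz => hg.2 (hh.2 hz)⟩

lemma hol_mo {a : ℂ} (ha : Complex.abs a < 1) : HolSelfDisk (mo a) :=
  ⟨mo_diff ha, fun _ hz => mo_mem ha hz⟩

lemma hol_unit_mul {b : ℂ} (hb : Complex.abs b ≤ 1) : HolSelfDisk (fun z => b * z) := by
  constructor
  · exact (differentiable_id.const_mul b).differentiableOn
  · intro z hz
    rw [mem_ball_zero_iff] at hz ⊢
    calc ‖b * z‖ = Complex.abs b * ‖z‖ := by simp [Complex.norm_eq_abs]
      _ ≤ 1 * ‖z‖ := by apply mul_le_mul_of_nonneg_right hb (norm_nonneg z)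
      _ < 1 := by simpa using hz

lemma hol_iterate {f : ℂ → ℂ} (hf : HolSelfDisk f) : ∀ n, HolSelfDisk (f^[n]) := by
  intro n
  induction n with
  | zero => exact ⟨differentiableOn_id, fun z hz => by simpa using hz⟩
  | succ n ih =>
      rw [Function.iterate_succ']
      exact hol_comp f (f^[n]) hf ih

variable {f : ℂ → ℂ}

noncomputable def aa (f : ℂ → ℂ) (n : ℕ) : ℂ := f^[n] 0
noncomputable def FF (f : ℂ → ℂ) (n : ℕ) (z : ℂ) : ℂ := mo (-(aa f n)) (f^[n] z)
noncomputable def gg (f : ℂ → ℂ) (n : ℕ) : ℂ → ℂ :=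
  fun w => mo (-(aa f (n+1))) (f (mo (aa f n) w))
noncomputable def lam (f : ℂ → ℂ) (n : ℕ) : ℂ := deriv (gg f n) 0
noncomputable def ss (f : ℂ → ℂ) (n : ℕ) : ℝ := Complex.abs (lam f n)
noncomputable def HH (f : ℂ → ℂ) (n m : ℕ) : ℂ → ℂ :=
  fun v => mo (-(aa f m)) (f^[m-n] (mo (aa f n) v))

lemma haa (hf : HolSelfDisk f) (n : ℕ) : Complex.abs (aa f n) < 1 := by
  have : aa f n ∈ ball (0:ℂ) 1 := (hol_iterate hf n).2 (mem_ball_self one_pos)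
  rwa [mem_ball_zero_iff] at this

lemma haan (hf : HolSelfDisk f) (n : ℕ) : Complex.abs (-(aa f n)) < 1 := by
  rw [map_neg_eq_map]; exact haa hf n

lemma hol_FF (hf : HolSelfDisk f) (n : ℕ) : HolSelfDisk (FF f n) :=
  hol_comp (mo (-(aa f n))) (f^[n]) (hol_mo (haan hf n)) (hol_iterate hf n)

lemma hol_gg (hf : HolSelfDisk f) (n : ℕ) : HolSelfDisk (gg f n) :=
  hol_comp (mo (-(aa f (n+1)))) (fun w => f (mo (aa f n) w)) (hol_mo (haan hf (n+1)))
    (hol_comp f (mo (aa f n)) hf (hol_mo (haa hf n)))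

lemma gg_zero (hf : HolSelfDisk f) (n : ℕ) : gg f n 0 = 0 := by
  rw [gg]
  show mo (-(aa f (n+1))) (f (mo (aa f n) 0)) = 0
  rw [mo_apply_zero]
  have : f (aa f n) = aa f (n+1) := (Function.iterate_succ_apply' f n 0).symm
  rw [this, mo_neg_self]

lemma ss_nonneg (n : ℕ) : 0 ≤ ss f n := Complex.abs.nonneg _

lemma ss_le_one (hf : HolSelfDisk f) (n : ℕ) : ss f n ≤ 1 :=
  Complex.abs_deriv_le_one_of_mapsTo_ball (hol_gg hf n).1 (hol_gg hf n).2 (gg_zero hf n) one_pos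

lemma FF_zero_eq (z : ℂ) : FF f 0 z = z := by
  rw [FF]
  show mo (-(aa f 0)) (f^[0] z) = z
  have : aa f 0 = 0 := rfl
  rw [this, neg_zero, Function.iterate_zero_apply, mo_zero]

lemma FF_mem (hf : HolSelfDisk f) (n : ℕ) {z : ℂ} (hz : z ∈ ball (0:ℂ) 1) :
    FF f n z ∈ ball (0:ℂ) 1 := (hol_FF hf n).2 hz

lemma FF_step (hf : HolSelfDisk f) (n : ℕ) {z : ℂ} (hz : z ∈ ball (0:ℂ) 1) :
    FF f (n+1) z = gg f n (FF f n z) := by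
  rw [FF, FF, gg]
  have h1 : f^[n] z ∈ ball (0:ℂ) 1 := (hol_iterate hf n).2 hz
  rw [mo_inv' (haa hf n) (mem_ball_zero_iff.mp h1)]
  rw [Function.iterate_succ_apply']


lemma FF_mono (hf : HolSelfDisk f) (n : ℕ) {z : ℂ} (hz : z ∈ ball (0:ℂ) 1) :
    Complex.abs (FF f (n+1) z) * (1 + ss f n * Complex.abs (FF f n z))
      ≤ Complex.abs (FF f n z) * (ss f n + Complex.abs (FF f n z)) := by
  rw [FF_step hf n hz]
  exact schwarz_sharp (hol_gg hf n).1 (hol_gg hf n).2 (gg_zero hf n) (FF_mem hf n hz)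

lemma FF_dec (hf : HolSelfDisk f) (n : ℕ) {z : ℂ} (hz : z ∈ ball (0:ℂ) 1) :
    Complex.abs (FF f (n+1) z) ≤ Complex.abs (FF f n z) := by
  have h := FF_mono hf n hz
  have hx1 : Complex.abs (FF f n z) < 1 := mem_ball_zero_iff.mp (FF_mem hf n hz)
  have hx0 : (0:ℝ) ≤ Complex.abs (FF f n z) := Complex.abs.nonneg _
  have hA0 : (0:ℝ) ≤ Complex.abs (FF f (n+1) z) := Complex.abs.nonneg _
  have hs0 : (0:ℝ) ≤ ss f n := ss_nonneg n
  have hs1 : ss f n ≤ 1 := ss_le_one hf n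
  have t1 : (0:ℝ) ≤ Complex.abs (FF f n z) * ((1 - ss f n)*(1 - Complex.abs (FF f n z))) :=
    mul_nonneg hx0 (mul_nonneg (by linarith) (by linarith))
  have hp : (0:ℝ) < 1 + ss f n * Complex.abs (FF f n z) := by
    have := mul_nonneg hs0 hx0; linarith
  nlinarith [h, t1, hp]

lemma FF_le (hf : HolSelfDisk f) (n : ℕ) {z : ℂ} (hz : z ∈ ball (0:ℂ) 1) :
    Complex.abs (FF f n z) ≤ Complex.abs z := by
  induction n with
  | zero => rw [FF_zero_eq]
  | succ n ih => exact le_trans (FF_dec hf n hz) ih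

lemma hol_HH (hf : HolSelfDisk f) (n m : ℕ) : HolSelfDisk (HH f n m) :=
  hol_comp (mo (-(aa f m))) (fun v => f^[m-n] (mo (aa f n) v)) (hol_mo (haan hf m))
    (hol_comp (f^[m-n]) (mo (aa f n)) (hol_iterate hf (m-n)) (hol_mo (haa hf n)))

lemma HH_zero (hf : HolSelfDisk f) {n m : ℕ} (hnm : n ≤ m) : HH f n m 0 = 0 := by
  show mo (-(aa f m)) (f^[m-n] (mo (aa f n) 0)) = 0
  rw [mo_apply_zero]
  have h1 : f^[m-n] (aa f n) = aa f m := by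
    show f^[m-n] (f^[n] 0) = f^[m] 0
    rw [← Function.iterate_add_apply, Nat.sub_add_cancel hnm]
  rw [h1, mo_neg_self]

lemma HH_FF (hf : HolSelfDisk f) {n m : ℕ} (hnm : n ≤ m) {z : ℂ} (hz : z ∈ ball (0:ℂ) 1) :
    HH f n m (FF f n z) = FF f m z := by
  show mo (-(aa f m)) (f^[m-n] (mo (aa f n) (FF f n z))) = FF f m z
  have h1 : f^[n] z ∈ ball (0:ℂ) 1 := (hol_iterate hf n).2 hz
  rw [FF, mo_inv' (haa hf n) (mem_ball_zero_iff.mp h1)]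
  rw [← Function.iterate_add_apply, Nat.sub_add_cancel hnm]
  rfl

lemma HH_deriv (hf : HolSelfDisk f) {n m : ℕ} (hnm : n ≤ m) :
    deriv (HH f n m) 0 = ∏ k ∈ Finset.Ico n m, lam f k := by
  induction m, hnm using Nat.le_induction with
  | base =>
      have hEq : HH f n n =ᶠ[nhds (0:ℂ)] id := by
        filter_upwards [isOpen_ball.mem_nhds (mem_ball_self one_pos)] with v hv
        show mo (-(aa f n)) (f^[n-n] (mo (aa f n) v)) = v
        rw [Nat.sub_self, Function.iterate_zero_apply,
          mo_inv (haa hf n) (mem_ball_zero_iff.mp hv)]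
      rw [hEq.deriv_eq, deriv_id, Finset.Ico_self, Finset.prod_empty]
  | succ m hm ih =>
      have hEq : HH f n (m+1) =ᶠ[nhds (0:ℂ)] (gg f m) ∘ (HH f n m) := by
        filter_upwards [isOpen_ball.mem_nhds (mem_ball_self one_pos)] with v hv
        show mo (-(aa f (m+1))) (f^[m+1-n] (mo (aa f n) v))
          = gg f m (HH f n m v)
        show _ = mo (-(aa f (m+1))) (f (mo (aa f m) (mo (-(aa f m)) (f^[m-n] (mo (aa f n) v)))))
        have h1 : f^[m-n] (mo (aa f n) v) ∈ ball (0:ℂ) 1 :=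
          (hol_iterate hf (m-n)).2 (mo_mem (haa hf n) hv)
        rw [mo_inv' (haa hf m) (mem_ball_zero_iff.mp h1)]
        rw [Nat.succ_sub hm, Function.iterate_succ_apply']
      rw [hEq.deriv_eq]
      have hd1 : DifferentiableAt ℂ (gg f m) (HH f n m 0) := by
        rw [HH_zero hf hm]
        exact (hol_gg hf m).1.differentiableAt (isOpen_ball.mem_nhds (mem_ball_self one_pos))
      have hd2 : DifferentiableAt ℂ (HH f n m) 0 :=
        (hol_HH hf n m).1.differentiableAt (isOpen_ball.mem_nhds (mem_ball_self one_pos))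
      rw [deriv_comp 0 hd1 hd2, HH_zero hf hm, ih, Finset.prod_Ico_succ_top hm]
      show lam f m * _ = _
      ring

/-- compact subsets of the disk are in a smaller closed disk -/
lemma compact_bound {K : Set ℂ} (hK : K ⊆ ball (0:ℂ) 1) (hKc : IsCompact K) :
    ∃ r : ℝ, 0 ≤ r ∧ r < 1 ∧ ∀ z ∈ K, Complex.abs z ≤ r := by
  rcases K.eq_empty_or_nonempty with rfl | hne
  · exact ⟨0, le_rfl, one_pos, fun z hz => absurd hz (notMem_empty z)⟩
  · obtain ⟨x, hxK, hx⟩ := hKc.exists_isMaxOn hne continuous_norm.continuousOn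
    refine ⟨Complex.abs x, Complex.abs.nonneg x, ?_, fun z hz => hx hz⟩
    exact mem_ball_zero_iff.mp (hK hxK)

lemma step_r (hf : HolSelfDisk f) {r : ℝ} (hr0 : 0 ≤ r) (hr1 : r < 1) (n : ℕ) {z : ℂ} (hz : z ∈ ball (0:ℂ) 1)
    (hzr : Complex.abs z ≤ r) :
    Complex.abs (FF f (n+1) z) * (1 + ss f n * r) ≤ (ss f n + r) * Complex.abs (FF f n z) := by
  set A := Complex.abs (FF f (n+1) z) with hA
  set x := Complex.abs (FF f n z) with hx
  have h1 : A * (1 + ss f n * x) ≤ x * (ss f n + x) := FF_mono hf n hz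
  have h2 : A ≤ x := FF_dec hf n hz
  have h3 : x ≤ r := le_trans (FF_le hf n hz) hzr
  have hs0 := ss_nonneg (f:=f) n
  have hs1 := ss_le_one hf n
  have hA0 : 0 ≤ A := Complex.abs.nonneg _
  have hx0 : 0 ≤ x := Complex.abs.nonneg _
  have t1 : A*(ss f n*(r-x)) ≤ x*(ss f n*(r-x)) :=
    mul_le_mul_of_nonneg_right h2 (mul_nonneg hs0 (by linarith))
  have t2 : (0:ℝ) ≤ x*((r-x)*(1-ss f n)) :=
    mul_nonneg hx0 (mul_nonneg (by linarith) (by linarith))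
  nlinarith [h1, t1, t2]

lemma prod_bound (hf : HolSelfDisk f) {r : ℝ} (hr0 : 0 ≤ r) (hr1 : r < 1) (n : ℕ) {z : ℂ} (hz : z ∈ ball (0:ℂ) 1)
    (hzr : Complex.abs z ≤ r) :
    Complex.abs (FF f n z) ≤ r * ∏ k ∈ Finset.range n, ((ss f k + r)/(1 + ss f k * r)) := by
  induction n with
  | zero => simpa using le_trans (FF_le hf 0 hz) hzr
  | succ n ih =>
      have hs0 := ss_nonneg (f:=f) n
      have hpos : (0:ℝ) < 1 + ss f n * r := by nlinarith
      have h1 := step_r hf hr0 hr1 n hz hzr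
      have h2 : Complex.abs (FF f (n+1) z) ≤ (ss f n + r)/(1 + ss f n * r) * Complex.abs (FF f n z) := by
        rw [div_mul_eq_mul_div, le_div_iff₀ hpos]
        linarith [h1]
      have h3 : (0:ℝ) ≤ (ss f n + r)/(1 + ss f n * r) := by positivity
      calc Complex.abs (FF f (n+1) z) ≤ (ss f n + r)/(1 + ss f n * r) * Complex.abs (FF f n z) := h2
        _ ≤ (ss f n + r)/(1 + ss f n * r) * (r * ∏ k ∈ Finset.range n, ((ss f k + r)/(1 + ss f k * r))) :=
            mul_le_mul_of_nonneg_left ih h3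
        _ = r * ∏ k ∈ Finset.range (n+1), ((ss f k + r)/(1 + ss f k * r)) := by
            rw [Finset.prod_range_succ]; ring

lemma prod_tendsto (hf : HolSelfDisk f) {r : ℝ} (hr0 : 0 ≤ r) (hr1 : r < 1)
    (hns : ¬ Summable (fun n => 1 - ss f n)) :
    Tendsto (fun n => ∏ k ∈ Finset.range n, ((ss f k + r)/(1 + ss f k * r))) atTop (nhds 0) := by
  set c : ℝ := (1 - r)/2 with hc
  have hcpos : 0 < c := by rw [hc]; linarith
  have hS : Tendsto (fun n => ∑ k ∈ Finset.range n, (1 - ss f k)) atTop atTop :=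
    (not_summable_iff_tendsto_nat_atTop_of_nonneg (fun n => by linarith [ss_le_one hf n])).mp hns
  have hu_nonneg : ∀ k, (0:ℝ) ≤ (ss f k + r)/(1 + ss f k * r) := fun k => by
    have := ss_nonneg (f:=f) k
    positivity
  have hu_le : ∀ k : ℕ, (ss f k + r)/(1 + ss f k * r) ≤ Real.exp (-(c * (1 - ss f k))) := by
    intro k
    have hs0 := ss_nonneg (f:=f) k
    have hs1 := ss_le_one hf k
    have hpos : (0:ℝ) < 1 + ss f k * r := by nlinarith
    have h1 : (ss f k + r)/(1 + ss f k * r) ≤ 1 - c*(1 - ss f k) := by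
      rw [div_le_iff₀ hpos, hc]
      have hsr : ss f k * r ≤ r := mul_le_of_le_one_left hr0 hs1
      have key : (0:ℝ) ≤ (1 - ss f k) * (1 - r) * (1 - ss f k * r) :=
        mul_nonneg (mul_nonneg (by linarith) (by linarith)) (by linarith)
      nlinarith [key]
    calc (ss f k + r)/(1 + ss f k * r) ≤ 1 - c*(1 - ss f k) := h1
      _ ≤ Real.exp (-(c * (1 - ss f k))) := by
          have := Real.add_one_le_exp (-(c * (1 - ss f k)))
          linarith
  have hbound : ∀ n, ∏ k ∈ Finset.range n, ((ss f k + r)/(1 + ss f k * r))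
      ≤ Real.exp (-(c * ∑ k ∈ Finset.range n, (1 - ss f k))) := by
    intro n
    calc ∏ k ∈ Finset.range n, ((ss f k + r)/(1 + ss f k * r))
        ≤ ∏ k ∈ Finset.range n, Real.exp (-(c * (1 - ss f k))) :=
          Finset.prod_le_prod (fun k _ => hu_nonneg k) (fun k _ => hu_le k)
      _ = Real.exp (∑ k ∈ Finset.range n, -(c * (1 - ss f k))) := (Real.exp_sum _ _).symm
      _ = Real.exp (-(c * ∑ k ∈ Finset.range n, (1 - ss f k))) := by
          congr 1
          rw [Finset.mul_sum, ← Finset.sum_neg_distrib]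
  have h2 : Tendsto (fun n => -(c * ∑ k ∈ Finset.range n, (1 - ss f k))) atTop atBot :=
    tendsto_neg_atBot_iff.mpr (hS.const_mul_atTop hcpos)
  have h3 : Tendsto (fun n => Real.exp (-(c * ∑ k ∈ Finset.range n, (1 - ss f k)))) atTop (nhds 0) :=
    Real.tendsto_exp_atBot.comp h2
  exact squeeze_zero (fun n => Finset.prod_nonneg fun k _ => hu_nonneg k) hbound h3

/-- Case A conclusion : locally uniform convergence to 0. -/
lemma caseA (hf : HolSelfDisk f) (hns : ¬ Summable (fun n => 1 - ss f n)) :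
    TendstoLocallyUniformlyOn (fun n z => FF f n z) (fun _ => (0:ℂ)) atTop (ball (0:ℂ) 1) := by
  rw [tendstoLocallyUniformlyOn_iff_forall_isCompact isOpen_ball]
  intro K hK hKc
  obtain ⟨r, hr0, hr1, hrK⟩ := compact_bound hK hKc
  rw [Metric.tendstoUniformlyOn_iff]
  intro ε hε
  have hrP : Tendsto (fun n => r * ∏ k ∈ Finset.range n, ((ss f k + r)/(1 + ss f k * r))) atTop
      (nhds (r * 0)) := (prod_tendsto hf hr0 hr1 hns).const_mul r
  rw [mul_zero] at hrP
  filter_upwards [hrP.eventually (eventually_lt_nhds hε)] with n hn z hzK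
  have hzb : z ∈ ball (0:ℂ) 1 := hK hzK
  have h1 : Complex.abs (FF f n z) ≤ r * ∏ k ∈ Finset.range n, ((ss f k + r)/(1 + ss f k * r)) :=
    prod_bound hf hr0 hr1 n hzb (hrK z hzK)
  rw [dist_comm, dist_zero_right]
  exact lt_of_le_of_lt h1 hn

lemma one_sub_prod_le (S : Finset ℕ) (u : ℕ → ℝ) (h0 : ∀ i ∈ S, 0 ≤ u i)
    (h1 : ∀ i ∈ S, u i ≤ 1) : 1 - ∏ i ∈ S, u i ≤ ∑ i ∈ S, (1 - u i) := by
  induction S using Finset.cons_induction with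
  | empty => simp
  | cons a S ha ih =>
      rw [Finset.prod_cons, Finset.sum_cons]
      have hP0 : (0:ℝ) ≤ ∏ i ∈ S, u i :=
        Finset.prod_nonneg (fun i hi => h0 i (Finset.mem_cons_of_mem hi))
      have hP1 : ∏ i ∈ S, u i ≤ 1 :=
        Finset.prod_le_one (fun i hi => h0 i (Finset.mem_cons_of_mem hi))
          (fun i hi => h1 i (Finset.mem_cons_of_mem hi))
      have hua0 : 0 ≤ u a := h0 a (Finset.mem_cons_self a S)
      have hua1 : u a ≤ 1 := h1 a (Finset.mem_cons_self a S)
      have hih : 1 - ∏ i ∈ S, u i ≤ ∑ i ∈ S, (1 - u i) :=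
        ih (fun i hi => h0 i (Finset.mem_cons_of_mem hi))
          (fun i hi => h1 i (Finset.mem_cons_of_mem hi))
      nlinarith [mul_nonneg hP0 (by linarith : (0:ℝ) ≤ 1 - u a)]

lemma autpair (hf : HolSelfDisk f) (n : ℕ) {c : ℂ} (hc : Complex.abs c = 1) :
    IsDiskAutPair (fun z => mo (aa f n) (c⁻¹ * z)) (fun w => c * mo (-(aa f n)) w) := by
  have hcne : c ≠ 0 := by intro h; rw [h] at hc; simp at hc
  have hcinv : Complex.abs c⁻¹ = 1 := by rw [map_inv₀, hc, inv_one]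
  refine ⟨?_, ?_, ?_, ?_⟩
  · exact hol_comp (mo (aa f n)) (fun z => c⁻¹ * z) (hol_mo (haa hf n)) (hol_unit_mul hcinv.le)
  · exact hol_comp (fun w => c * w) (mo (-(aa f n))) (hol_unit_mul hc.le) (hol_mo (haan hf n))
  · intro z hz
    show c * mo (-(aa f n)) (mo (aa f n) (c⁻¹ * z)) = z
    have hz1 : Complex.abs (c⁻¹ * z) < 1 := by
      rw [map_mul, hcinv, one_mul]; exact mem_ball_zero_iff.mp hz
    rw [mo_inv (haa hf n) hz1]
    field_simp
  · intro w hw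
    show mo (aa f n) (c⁻¹ * (c * mo (-(aa f n)) w)) = w
    have he : c⁻¹ * (c * mo (-(aa f n)) w) = mo (-(aa f n)) w := by field_simp
    rw [he, mo_inv' (haa hf n) (mem_ball_zero_iff.mp hw)]

lemma autpair0 (hf : HolSelfDisk f) (n : ℕ) :
    IsDiskAutPair (mo (aa f n)) (mo (-(aa f n))) :=
  ⟨hol_mo (haa hf n), hol_mo (haan hf n),
    fun _ hz => mo_inv (haa hf n) (mem_ball_zero_iff.mp hz),
    fun _ hw => mo_inv' (haa hf n) (mem_ball_zero_iff.mp hw)⟩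

lemma caseB (hf : HolSelfDisk f) (hsum : Summable (fun n => 1 - ss f n)) :
    ∃ (h : ℂ → ℂ) (b : ℕ → ℂ), (∀ n, Complex.abs (b n) = 1) ∧ HolSelfDisk h ∧
      TendstoLocallyUniformlyOn (fun n z => b n * FF f n z) h atTop (ball (0:ℂ) 1) := by
  classical
  obtain ⟨N, hN⟩ : ∃ N, ∀ k, N ≤ k → 0 < ss f k := by
    have h0 : Tendsto (fun n => 1 - ss f n) atTop (nhds 0) := hsum.tendsto_atTop_zero
    have h1 : ∀ᶠ k in atTop, 1 - ss f k < 1 :=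
      h0.eventually (eventually_lt_nhds (by norm_num : (0:ℝ) < 1))
    obtain ⟨N, hN⟩ := eventually_atTop.mp h1
    exact ⟨N, fun k hk => by linarith [hN k hk]⟩
  set A : ℕ → ℝ := fun n => ∑ k ∈ Finset.range n, (1 - ss f k) with hAdef
  set L : ℝ := ∑' k, (1 - ss f k) with hLdef
  have hAtend : Tendsto A atTop (nhds L) := hsum.hasSum.tendsto_sum_nat
  have hAle : ∀ n, A n ≤ L := fun n =>
    Summable.sum_le_tsum (Finset.range n) (fun i _ => by linarith [ss_le_one hf i]) hsum
  have hAmono : Monotone A := by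
    intro n m hnm
    apply Finset.sum_le_sum_of_subset_of_nonneg (Finset.range_subset_range.mpr hnm)
    intro i _ _
    linarith [ss_le_one hf i]
  set BB : ℕ → ℂ := fun n => ∏ k ∈ Finset.Ico N n, (lam f k / ((ss f k : ℝ) : ℂ)) with hBBdef
  have hBB1 : ∀ n, Complex.abs (BB n) = 1 := by
    intro n
    rw [hBBdef]
    show Complex.abs (∏ k ∈ Finset.Ico N n, (lam f k / ((ss f k : ℝ) : ℂ))) = 1
    rw [map_prod]
    apply Finset.prod_eq_one
    intro k hk
    have hsk := hN k (Finset.mem_Ico.mp hk).1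
    rw [map_div₀, Complex.abs_ofReal, _root_.abs_of_pos hsk]
    exact div_self (ne_of_gt hsk)
  have hBBne : ∀ n, BB n ≠ 0 := by
    intro n h
    have := hBB1 n
    rw [h] at this
    simp at this
  set b : ℕ → ℂ := fun n => (BB n)⁻¹ with hbdef
  have hb1 : ∀ n, Complex.abs (b n) = 1 := by
    intro n
    rw [hbdef]
    show Complex.abs (BB n)⁻¹ = 1
    rw [map_inv₀, hBB1, inv_one]
  set F : ℕ → ℂ → ℂ := fun n z => b n * FF f n z with hFdef
  have hol_F : ∀ n, HolSelfDisk (F n) := fun n =>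
    hol_comp (fun w => b n * w) (FF f n) (hol_unit_mul (hb1 n).le) (hol_FF hf n)
  have hFle : ∀ n (z : ℂ), z ∈ ball (0:ℂ) 1 → Complex.abs (F n z) ≤ Complex.abs z := by
    intro n z hz
    show Complex.abs (b n * FF f n z) ≤ _
    rw [map_mul, hb1, one_mul]
    exact FF_le hf n hz
  set t : ℕ → ℕ → ℝ := fun n m => ∏ k ∈ Finset.Ico n m, ss f k with htdef
  have ht0 : ∀ n m, 0 ≤ t n m := fun n m =>
    Finset.prod_nonneg (fun k _ => ss_nonneg (f := f) k)
  have ht1 : ∀ n m, t n m ≤ 1 := fun n m =>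
    Finset.prod_le_one (fun k _ => ss_nonneg (f := f) k) (fun k _ => ss_le_one hf k)
  have htsum : ∀ n m, n ≤ m → 1 - t n m ≤ A m - A n := by
    intro n m hnm
    have h1 : A m - A n = ∑ k ∈ Finset.Ico n m, (1 - ss f k) :=
      (Finset.sum_Ico_eq_sub _ hnm).symm
    rw [h1]
    exact one_sub_prod_le _ _ (fun k _ => ss_nonneg (f := f) k) (fun k _ => ss_le_one hf k)
  -- main Cauchy-type estimate
  have hest : ∀ r : ℝ, 0 ≤ r → r < 1 → ∀ n m, N ≤ n → n ≤ m → ∀ z ∈ ball (0:ℂ) 1,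
      Complex.abs z ≤ r → Complex.abs (F m z - F n z) * (1 - r) ≤ 3 * (A m - A n) := by
    intro r hr0 hr1 n m hNn hnm z hz hzr
    set G : ℂ → ℂ := fun u => b m * HH f n m (BB n * u) with hGdef
    have hGhol : HolSelfDisk G :=
      hol_comp (fun w => b m * w) (fun u => HH f n m (BB n * u)) (hol_unit_mul (hb1 m).le)
        (hol_comp (HH f n m) (fun u => BB n * u) (hol_HH hf n m)
          (hol_unit_mul (hBB1 n).le))
    have hG0 : G 0 = 0 := by
      show b m * HH f n m (BB n * 0) = 0
      rw [mul_zero, HH_zero hf hnm, mul_zero]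
    have hd2 : DifferentiableAt ℂ (HH f n m) 0 :=
      (hol_HH hf n m).1.differentiableAt (isOpen_ball.mem_nhds (mem_ball_self one_pos))
    have hd3 : DifferentiableAt ℂ (fun u : ℂ => HH f n m (BB n * u)) 0 := by
      have h1 : DifferentiableAt ℂ (HH f n m) (BB n * 0) := by rwa [mul_zero]
      exact h1.comp 0 (differentiableAt_id.const_mul (BB n))
    have hBder : HasDerivAt (fun u : ℂ => BB n * u) (BB n * 1) 0 :=
      (hasDerivAt_id 0).const_mul (BB n)
    have hHder : HasDerivAt (HH f n m) (deriv (HH f n m) 0) (BB n * 0) := by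
      rw [mul_zero]; exact hd2.hasDerivAt
    have hcompd : HasDerivAt (fun u : ℂ => HH f n m (BB n * u))
        (deriv (HH f n m) 0 * (BB n * 1)) 0 := hHder.comp 0 hBder
    have hGder : HasDerivAt G (b m * (deriv (HH f n m) 0 * (BB n * 1))) 0 := by
      have := hcompd.const_mul (b m)
      exact this
    have hGt : deriv G 0 = ((t n m : ℝ) : ℂ) := by
      have hGd : deriv G 0 = b m * (deriv (HH f n m) 0 * (BB n * 1)) := hGder.deriv
      rw [mul_one] at hGd
      have hsplit : ∏ k ∈ Finset.Ico n m, lam f k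
          = ((t n m : ℝ) : ℂ) * ∏ k ∈ Finset.Ico n m, (lam f k / ((ss f k : ℝ) : ℂ)) := by
        rw [htdef]
        push_cast
        rw [← Finset.prod_mul_distrib]
        apply Finset.prod_congr rfl
        intro k hk
        have hsk := hN k (le_trans hNn (Finset.mem_Ico.mp hk).1)
        have hne : ((ss f k : ℝ) : ℂ) ≠ 0 := by
          simpa using ne_of_gt hsk
        field_simp
      have hIco : BB n * ∏ k ∈ Finset.Ico n m, (lam f k / ((ss f k : ℝ) : ℂ)) = BB m :=
        Finset.prod_Ico_consecutive _ hNn hnm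
      have hbm : b m = (BB m)⁻¹ := rfl
      rw [hGd, HH_deriv hf hnm, hsplit, hbm]
      have e1 : (((t n m : ℝ):ℂ) * ∏ k ∈ Finset.Ico n m, (lam f k / ((ss f k : ℝ) : ℂ))) * BB n
          = ((t n m : ℝ):ℂ) * BB m := by rw [← hIco]; ring
      rw [e1, mul_comm (((t n m : ℝ):ℂ)) (BB m), ← mul_assoc, inv_mul_cancel₀ (hBBne m), one_mul]
    have hFnmem : F n z ∈ ball (0:ℂ) 1 := (hol_F n).2 hz
    have hFnr : Complex.abs (F n z) ≤ r := le_trans (hFle n z hz) hzr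
    have happ := close_id hGhol.1 hGhol.2 hG0 hGt (ht0 n m) hFnmem hFnr hr1
    have hGF : G (F n z) = F m z := by
      show b m * HH f n m (BB n * (b n * FF f n z)) = b m * FF f m z
      have he : BB n * (b n * FF f n z) = FF f n z := by
        have hbn : b n = (BB n)⁻¹ := rfl
        rw [hbn, ← mul_assoc, mul_inv_cancel₀ (hBBne n), one_mul]
      rw [he, HH_FF hf hnm hz]
    rw [hGF] at happ
    calc Complex.abs (F m z - F n z) * (1 - r) ≤ 3 * (1 - t n m) := happ
      _ ≤ 3 * (A m - A n) := by linarith [htsum n m hnm]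
  -- pointwise Cauchy
  have hcau : ∀ z ∈ ball (0:ℂ) 1, CauchySeq (fun n => F n z) := by
    intro z hz
    rw [Metric.cauchySeq_iff]
    intro ε hε
    set r : ℝ := Complex.abs z with hrdef
    have hr1 : r < 1 := mem_ball_zero_iff.mp hz
    have hr0 : 0 ≤ r := Complex.abs.nonneg z
    obtain ⟨M, hMN, hML⟩ : ∃ M, N ≤ M ∧ L - A M < ε * (1 - r) / 3 := by
      have h1 : ∀ᶠ k in atTop, L - ε * (1 - r) / 3 < A k :=
        hAtend.eventually (eventually_gt_nhds (by nlinarith))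
      obtain ⟨M, hM⟩ := (h1.and (eventually_ge_atTop N)).exists
      exact ⟨M, hM.2, by linarith [hM.1]⟩
    have key : ∀ p q, M ≤ p → p ≤ q → dist (F q z) (F p z) < ε := by
      intro p q hMp hpq
      have h1 := hest r hr0 hr1 p q (le_trans hMN hMp) hpq z hz le_rfl
      have h2 : A q - A p ≤ L - A M := by
        have := hAle q
        have := hAmono hMp
        linarith
      have h3 : Complex.abs (F q z - F p z) * (1 - r) < ε * (1 - r) := by
        calc Complex.abs (F q z - F p z) * (1 - r) ≤ 3 * (A q - A p) := h1
          _ ≤ 3 * (L - A M) := by linarith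
          _ < ε * (1 - r) := by linarith
      have h4 : Complex.abs (F q z - F p z) < ε :=
        lt_of_mul_lt_mul_right (by linarith [h3]) (by linarith : (0:ℝ) ≤ 1 - r)
      rw [dist_eq_norm]
      exact h4
    refine ⟨M, fun p hp q hq => ?_⟩
    rcases le_total p q with h | h
    · rw [dist_comm]
      exact key p q hp h
    · exact key q p hq h
  set hfun : ℂ → ℂ := fun z => limUnder atTop (fun n => F n z) with hhdef
  have htend : ∀ z ∈ ball (0:ℂ) 1, Tendsto (fun n => F n z) atTop (nhds (hfun z)) :=
    fun z hz => (hcau z hz).tendsto_limUnder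
  have hTLU : TendstoLocallyUniformlyOn F hfun atTop (ball (0:ℂ) 1) := by
    rw [tendstoLocallyUniformlyOn_iff_forall_isCompact isOpen_ball]
    intro K hK hKc
    obtain ⟨r, hr0, hr1, hrK⟩ := compact_bound hK hKc
    rw [Metric.tendstoUniformlyOn_iff]
    intro ε hε
    obtain ⟨M, hMN, hML⟩ : ∃ M, N ≤ M ∧ L - A M < ε * (1 - r) / 6 := by
      have h1 : ∀ᶠ k in atTop, L - ε * (1 - r) / 6 < A k :=
        hAtend.eventually (eventually_gt_nhds (by nlinarith))
      obtain ⟨M, hM⟩ := (h1.and (eventually_ge_atTop N)).exists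
      exact ⟨M, hM.2, by linarith [hM.1]⟩
    filter_upwards [eventually_ge_atTop M] with n hn z hzK
    have hz : z ∈ ball (0:ℂ) 1 := hK hzK
    have hb2 : ∀ m, n ≤ m → dist (F m z) (F n z) ≤ ε/2 := by
      intro m hm
      have h1 := hest r hr0 hr1 n m (le_trans hMN hn) hm z hz (hrK z hzK)
      have h2 : A m - A n ≤ L - A M := by
        have := hAle m
        have := hAmono hn
        linarith
      have h3 : Complex.abs (F m z - F n z) * (1 - r) ≤ ε/2 * (1 - r) := by
        calc Complex.abs (F m z - F n z) * (1 - r) ≤ 3 * (A m - A n) := h1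
          _ ≤ 3 * (L - A M) := by linarith
          _ ≤ ε/2 * (1 - r) := by linarith
      have h4 : Complex.abs (F m z - F n z) ≤ ε/2 :=
        le_of_mul_le_mul_right (by linarith [h3]) (by linarith : (0:ℝ) < 1 - r)
      rw [dist_eq_norm]
      exact h4
    have hlim : Tendsto (fun m => dist (F m z) (F n z)) atTop
        (nhds (dist (hfun z) (F n z))) := (htend z hz).dist tendsto_const_nhds
    have h5 : dist (hfun z) (F n z) ≤ ε/2 :=
      le_of_tendsto hlim (eventually_atTop.mpr ⟨n, hb2⟩)
    calc dist (hfun z) (F n z) ≤ ε/2 := h5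
      _ < ε := by linarith
  refine ⟨hfun, b, hb1, ⟨?_, ?_⟩, hTLU⟩
  · exact hTLU.differentiableOn (Eventually.of_forall (fun n => (hol_F n).1)) isOpen_ball
  · intro z hz
    rw [mem_ball_zero_iff]
    have h1 : ‖hfun z‖ ≤ ‖z‖ := by
      apply le_of_tendsto (htend z hz).norm
      exact Eventually.of_forall (fun n => hFle n z hz)
    exact lt_of_le_of_lt h1 (mem_ball_zero_iff.mp hz)

end Straighten

theorem stmt2 (f : ℂ → ℂ) (hf : HolSelfDisk f) :
    ∃ (h : ℂ → ℂ) (γ γinv : ℕ → ℂ → ℂ),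
      HolSelfDisk h ∧ (∀ n, IsDiskAutPair (γ n) (γinv n)) ∧
      TendstoLocallyUniformlyOn (fun n z => γinv n (f^[n] z)) h atTop (ball (0:ℂ) 1) := by
  classical
  by_cases hsum : Summable (fun n => 1 - Straighten.ss f n)
  · obtain ⟨h, b, hb1, hh, hTLU⟩ := Straighten.caseB hf hsum
    refine ⟨h, fun n => fun z => Straighten.mo (Straighten.aa f n) ((b n)⁻¹ * z),
      fun n => fun w => b n * Straighten.mo (-(Straighten.aa f n)) w, hh,
      fun n => Straighten.autpair hf n (hb1 n), ?_⟩
    exact hTLU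
  · refine ⟨fun _ => 0, fun n => Straighten.mo (Straighten.aa f n),
      fun n => Straighten.mo (-(Straighten.aa f n)), ?_, fun n => Straighten.autpair0 hf n, ?_⟩
    · exact ⟨differentiableOn_const 0, fun z _ => mem_ball_self one_pos⟩
    · exact Straighten.caseA hf hsum
end

section
/- Left straightenings are unique up to post-composition with an automorphism: if {γ_n} and {δ_n} are sequences of automorphisms of the unit disk D with γ_n^{-1} ∘ f^n → h and δ_n^{-1} ∘ f^n → k locally uniformly, for holomorphic h, k : D → D, then there exists an automorphism φ of D with h = φ ∘ k. -/
open Complex Metric Filter Set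

/-! ### Auxiliary Möbius-map machinery -/

noncomputable def mob (a z : ℂ) : ℂ := (z - a) / (1 - (starRingEnd ℂ) a * z)

lemma memD {z : ℂ} : z ∈ ball (0:ℂ) 1 ↔ ‖z‖ < 1 := by
  simp [mem_ball_zero_iff]

lemma normSq_den_sub (a z : ℂ) :
    Complex.normSq (1 - (starRingEnd ℂ) a * z) - Complex.normSq (z - a)
      = (1 - Complex.normSq a) * (1 - Complex.normSq z) := by
  simp only [Complex.normSq_apply, Complex.sub_re, Complex.sub_im, Complex.mul_re,
    Complex.mul_im, Complex.one_re, Complex.one_im, Complex.conj_re, Complex.conj_im]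
  ring

lemma den_ne {a z : ℂ} (ha : ‖a‖ < 1) (hz : ‖z‖ < 1) :
    (1 : ℂ) - (starRingEnd ℂ) a * z ≠ 0 := by
  intro H
  rw [sub_eq_zero] at H
  have : ‖(starRingEnd ℂ) a * z‖ = 1 := by rw [← H]; simp
  rw [norm_mul, Complex.norm_conj] at this
  nlinarith [norm_nonneg a, norm_nonneg z]

lemma mob_lt_one {a z : ℂ} (ha : ‖a‖ < 1) (hz : ‖z‖ < 1) :
    ‖mob a z‖ < 1 := by
  have hd := den_ne ha hz
  rw [mob, norm_div, div_lt_one (norm_pos_iff.2 hd)]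
  have h1 : Complex.normSq (z - a) < Complex.normSq (1 - (starRingEnd ℂ) a * z) := by
    have := normSq_den_sub a z
    have ha' : Complex.normSq a < 1 := by
      rw [Complex.normSq_eq_norm_sq]; nlinarith [norm_nonneg a]
    have hz' : Complex.normSq z < 1 := by
      rw [Complex.normSq_eq_norm_sq]; nlinarith [norm_nonneg z]
    nlinarith
  rw [Complex.norm_def, Complex.norm_def]
  exact Real.sqrt_lt_sqrt (Complex.normSq_nonneg _) h1

lemma mob_mob {a z : ℂ} (ha : ‖a‖ < 1) (hz : ‖z‖ < 1) :
    mob (-a) (mob a z) = z := by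
  have h1 := den_ne ha hz
  have h2 : (1:ℂ) - (starRingEnd ℂ) (-a) * mob a z ≠ 0 :=
    den_ne (by simpa using ha) (mob_lt_one ha hz)
  simp only [mob, map_neg, neg_mul, sub_neg_eq_add] at h2 ⊢
  rw [div_eq_iff h2, div_eq_mul_inv]
  linear_combination (z - a) * mul_inv_cancel₀ h1

lemma mob_self (a : ℂ) : mob a a = 0 := by simp [mob]

lemma mob_neg_zero (a : ℂ) : mob (-a) 0 = a := by simp [mob]

lemma mob_hol {a : ℂ} (ha : ‖a‖ < 1) : HolSelfDisk (mob a) := by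
  constructor
  · apply DifferentiableOn.div
    · exact (differentiable_id.sub_const a).differentiableOn
    · exact (differentiable_const _ |>.sub
        ((differentiable_const _).mul differentiable_id)).differentiableOn
    · exact fun z hz => den_ne ha (memD.1 hz)
  · exact fun z hz => memD.2 (mob_lt_one ha (memD.1 hz))

lemma mob_pair {a : ℂ} (ha : ‖a‖ < 1) : IsDiskAutPair (mob a) (mob (-a)) := by
  refine ⟨mob_hol ha, mob_hol (by simpa using ha), fun z hz => mob_mob ha (memD.1 hz),
    fun z hz => ?_⟩
  have := mob_mob (a := -a) (by simpa using ha) (memD.1 hz)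
  simpa using this

lemma hol_comp {p q : ℂ → ℂ} (hp : HolSelfDisk p) (hq : HolSelfDisk q) :
    HolSelfDisk (fun z => p (q z)) :=
  ⟨hp.1.comp hq.1 hq.2, hp.2.comp hq.2⟩

lemma pair_comp {p pinv q qinv : ℂ → ℂ} (hp : IsDiskAutPair p pinv) (hq : IsDiskAutPair q qinv) :
    IsDiskAutPair (fun z => p (q z)) (fun z => qinv (pinv z)) := by
  refine ⟨hol_comp hp.1 hq.1, hol_comp hq.2.1 hp.2.1, fun z hz => ?_, fun z hz => ?_⟩
  · show qinv (pinv (p (q z))) = z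
    rw [hp.2.2.1 _ (hq.1.2 hz), hq.2.2.1 _ hz]
  · show p (q (qinv (pinv z))) = z
    rw [hq.2.2.2 _ (hp.2.1.2 hz), hp.2.2.2 _ hz]

lemma pair_symm {p pinv : ℂ → ℂ} (hp : IsDiskAutPair p pinv) : IsDiskAutPair pinv p :=
  ⟨hp.2.1, hp.1, hp.2.2.2, hp.2.2.1⟩

lemma rot_pair {η : ℂ} (hη : ‖η‖ = 1) :
    IsDiskAutPair (fun z => η * z) (fun z => η⁻¹ * z) := by
  have hη0 : η ≠ 0 := by intro H; rw [H] at hη; simp at hη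
  have h1 : HolSelfDisk (fun z => η * z) :=
    ⟨(differentiable_const _ |>.mul differentiable_id).differentiableOn,
      fun z hz => memD.2 (by rw [norm_mul, hη, one_mul]; exact memD.1 hz)⟩
  have h2 : HolSelfDisk (fun z => η⁻¹ * z) :=
    ⟨(differentiable_const _ |>.mul differentiable_id).differentiableOn,
      fun z hz => memD.2 (by rw [norm_mul, norm_inv, hη]; simpa using memD.1 hz)⟩
  exact ⟨h1, h2, fun z _ => by field_simp, fun z _ => by field_simp⟩

/-- Schwarz–Pick inequality. -/
lemma schwarz_pick {f : ℂ → ℂ} (hf : HolSelfDisk f) {z w : ℂ}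
    (hz : ‖z‖ < 1) (hw : ‖w‖ < 1) :
    ‖mob (f w) (f z)‖ ≤ ‖mob w z‖ := by
  have hfw : ‖f w‖ < 1 := memD.1 (hf.2 (memD.2 hw))
  have hg : HolSelfDisk (fun u => mob (f w) (f (mob (-w) u))) :=
    hol_comp (mob_hol hfw) (hol_comp hf (mob_hol (by simpa using hw)))
  have hg0 : mob (f w) (f (mob (-w) 0)) = 0 := by rw [mob_neg_zero, mob_self]
  have key := Complex.norm_le_norm_of_mapsTo_ball hg.1 (hg.2.mono_right ball_subset_closedBall) hg0 (mob_lt_one hw hz)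
  rwa [mob_mob hw hz] at key

lemma pair_iso {p pinv : ℂ → ℂ} (hp : IsDiskAutPair p pinv) {z w : ℂ}
    (hz : ‖z‖ < 1) (hw : ‖w‖ < 1) :
    ‖mob (p w) (p z)‖ = ‖mob w z‖ := by
  refine le_antisymm (schwarz_pick hp.1 hz hw) ?_
  have h1 : ‖p z‖ < 1 := memD.1 (hp.1.2 (memD.2 hz))
  have h2 : ‖p w‖ < 1 := memD.1 (hp.1.2 (memD.2 hw))
  have := schwarz_pick hp.2.1 h1 h2
  rwa [hp.2.2.1 _ (memD.2 hz), hp.2.2.1 _ (memD.2 hw)] at this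

lemma iter_hol {f : ℂ → ℂ} (hf : HolSelfDisk f) : ∀ n, HolSelfDisk (f^[n]) := by
  intro n
  induction n with
  | zero => exact ⟨differentiableOn_id, mapsTo_id _⟩
  | succ n ih =>
    rw [Function.iterate_succ']
    exact hol_comp (q := f^[n]) hf ih

lemma eq_unimodular_mul {H K : ℂ → ℂ}
    (hH : DifferentiableOn ℂ H (ball (0:ℂ) 1)) (hK : DifferentiableOn ℂ K (ball (0:ℂ) 1))
    (habs : ∀ z ∈ ball (0:ℂ) 1, ‖H z‖ = ‖K z‖) :
    ∃ η : ℂ, ‖η‖ = 1 ∧ ∀ z ∈ ball (0:ℂ) 1, H z = η * K z := by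
  by_cases hc : ∀ z ∈ ball (0:ℂ) 1, K z = 0
  · refine ⟨1, by simp, fun z hz => ?_⟩
    have h1 := habs z hz
    rw [hc z hz, norm_zero, norm_eq_zero] at h1
    rw [h1, hc z hz, mul_zero]
  · push_neg at hc
    obtain ⟨z0, hz0, hKz0⟩ := hc
    have hU : IsOpen (ball (0:ℂ) 1 ∩ K ⁻¹' {0}ᶜ) :=
      hK.continuousOn.isOpen_inter_preimage isOpen_ball isOpen_compl_singleton
    obtain ⟨r, hr0, hrsub⟩ := isOpen_iff.1 hU z0 ⟨hz0, hKz0⟩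
    have hrb : ball z0 r ⊆ ball (0:ℂ) 1 := fun x hx => (hrsub hx).1
    have hKne : ∀ x ∈ ball z0 r, K x ≠ 0 := fun x hx => (hrsub hx).2
    set q : ℂ → ℂ := fun z => H z / K z with hq
    have hqd : DifferentiableOn ℂ q (ball z0 r) :=
      (hH.mono hrb).div (hK.mono hrb) hKne
    have hqabs : ∀ x ∈ ball z0 r, ‖q x‖ = 1 := by
      intro x hx
      rw [hq]
      simp only [norm_div]
      rw [habs x (hrb hx), div_self]
      simpa using hKne x hx
    have hmax : IsMaxOn (norm ∘ q) (ball z0 r) z0 := fun x hx => by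
      simp only [mem_setOf_eq, Function.comp_apply,
        hqabs x hx, hqabs z0 (mem_ball_self hr0), le_refl]
    have heq := Complex.eqOn_of_isPreconnected_of_isMaxOn_norm
      (convex_ball z0 r).isPreconnected isOpen_ball hqd (mem_ball_self hr0) hmax
    refine ⟨q z0, hqabs z0 (mem_ball_self hr0), ?_⟩
    have hloc : ∀ x ∈ ball z0 r, H x = q z0 * K x := by
      intro x hx
      have := heq hx
      simp only [Function.const_apply] at this
      rw [← this, hq]
      field_simp [hKne x hx]
    have hHa : AnalyticOnNhd ℂ H (ball (0:ℂ) 1) := hH.analyticOnNhd isOpen_ball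
    have hKa : AnalyticOnNhd ℂ (fun z => q z0 * K z) (ball (0:ℂ) 1) :=
      analyticOnNhd_const.mul (hK.analyticOnNhd isOpen_ball)
    have hev : H =ᶠ[nhds z0] (fun z => q z0 * K z) :=
      Filter.eventuallyEq_of_mem (ball_mem_nhds z0 hr0) hloc
    exact fun z hz => hHa.eqOn_of_preconnected_of_eventuallyEq hKa
      (convex_ball (0:ℂ) 1).isPreconnected hz0 hev hz

theorem stmt4 (f : ℂ → ℂ) (hf : HolSelfDisk f)
    (γ γinv δ δinv : ℕ → ℂ → ℂ) (h k : ℂ → ℂ)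
    (hγ : ∀ n, IsDiskAutPair (γ n) (γinv n))
    (hδ : ∀ n, IsDiskAutPair (δ n) (δinv n))
    (hh : HolSelfDisk h) (hk : HolSelfDisk k)
    (hconvh : TendstoLocallyUniformlyOn (fun n z => γinv n (f^[n] z)) h atTop (ball (0:ℂ) 1))
    (hconvk : TendstoLocallyUniformlyOn (fun n z => δinv n (f^[n] z)) k atTop (ball (0:ℂ) 1)) :
    ∃ φ φinv : ℂ → ℂ, IsDiskAutPair φ φinv ∧ ∀ z ∈ ball (0:ℂ) 1, h z = φ (k z) := by
  have h0mem : (0:ℂ) ∈ ball (0:ℂ) 1 := mem_ball_self one_pos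
  have hh0 : ‖h 0‖ < 1 := memD.1 (hh.2 h0mem)
  have hk0 : ‖k 0‖ < 1 := memD.1 (hk.2 h0mem)
  -- key modulus identity
  have key : ∀ z ∈ ball (0:ℂ) 1,
      ‖mob (h 0) (h z)‖ = ‖mob (k 0) (k z)‖ := by
    intro z hz
    have hhz : ‖h z‖ < 1 := memD.1 (hh.2 hz)
    have hkz : ‖k z‖ < 1 := memD.1 (hk.2 hz)
    have t1 : Tendsto (fun n => γinv n (f^[n] z)) atTop (nhds (h z)) := hconvh.tendsto_at hz
    have t2 : Tendsto (fun n => γinv n (f^[n] 0)) atTop (nhds (h 0)) := hconvh.tendsto_at h0mem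
    have t3 : Tendsto (fun n => δinv n (f^[n] z)) atTop (nhds (k z)) := hconvk.tendsto_at hz
    have t4 : Tendsto (fun n => δinv n (f^[n] 0)) atTop (nhds (k 0)) := hconvk.tendsto_at h0mem
    have contF : ∀ {a b : ℂ}, ‖a‖ < 1 → ‖b‖ < 1 →
        ContinuousAt (fun p : ℂ × ℂ =>
          ‖(p.2 - p.1) / (1 - (starRingEnd ℂ) p.1 * p.2)‖) (a, b) := by
      intro a b ha hb
      apply continuous_norm.continuousAt.comp
      exact ContinuousAt.div (continuous_snd.sub continuous_fst).continuousAt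
        (continuous_const.sub
          ((Complex.continuous_conj.comp continuous_fst).mul continuous_snd)).continuousAt
        (den_ne ha hb)
    have c1 : Tendsto (fun n => ‖mob (γinv n (f^[n] 0)) (γinv n (f^[n] z))‖) atTop
        (nhds (‖mob (h 0) (h z)‖)) := by
      have := (contF hh0 hhz).tendsto.comp (t2.prodMk_nhds t1)
      simpa [mob, Function.comp_def] using this
    have c2 : Tendsto (fun n => ‖mob (δinv n (f^[n] 0)) (δinv n (f^[n] z))‖) atTop
        (nhds (‖mob (k 0) (k z)‖)) := by
      have := (contF hk0 hkz).tendsto.comp (t4.prodMk_nhds t3)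
      simpa [mob, Function.comp_def] using this
    have heq : ∀ n, ‖mob (γinv n (f^[n] 0)) (γinv n (f^[n] z))‖
        = ‖mob (δinv n (f^[n] 0)) (δinv n (f^[n] z))‖ := by
      intro n
      have hx : f^[n] 0 ∈ ball (0:ℂ) 1 := (iter_hol hf n).2 h0mem
      have hy : f^[n] z ∈ ball (0:ℂ) 1 := (iter_hol hf n).2 hz
      have hpair : IsDiskAutPair (fun u => γinv n (δ n u)) (fun u => δinv n (γ n u)) :=
        pair_comp (pair_symm (hγ n)) (hδ n)
      have := pair_iso hpair (memD.1 ((hδ n).2.1.2 hy)) (memD.1 ((hδ n).2.1.2 hx))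
      rwa [(hδ n).2.2.2 _ hx, (hδ n).2.2.2 _ hy] at this
    exact tendsto_nhds_unique (Filter.Tendsto.congr heq c1) c2
  have hHd : DifferentiableOn ℂ (fun z => mob (h 0) (h z)) (ball (0:ℂ) 1) :=
    (mob_hol hh0).1.comp hh.1 hh.2
  have hKd : DifferentiableOn ℂ (fun z => mob (k 0) (k z)) (ball (0:ℂ) 1) :=
    (mob_hol hk0).1.comp hk.1 hk.2
  obtain ⟨η, hη, hηeq⟩ := eq_unimodular_mul hHd hKd key
  refine ⟨fun z => mob (-(h 0)) (η * mob (k 0) z),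
    fun z => mob (-(k 0)) (η⁻¹ * mob (h 0) z), ?_, ?_⟩
  · have P1 := mob_pair hk0
    have P2 := rot_pair hη
    have P3 : IsDiskAutPair (mob (-(h 0))) (mob (h 0)) := by
      have := pair_symm (mob_pair hh0)
      simpa using this
    have PP := pair_comp P3 (pair_comp P2 P1)
    exact PP
  · intro z hz
    show h z = mob (-(h 0)) (η * mob (k 0) (k z))
    have := hηeq z hz
    rw [← this, mob_mob hh0 (memD.1 (hh.2 hz))]
end

section
/- Let F be a holomorphic self-map of the upper half-plane H⁺ which is parabolic with Wolff point at ∞, meaning F^n → ∞ locally uniformly and F(w_n)/w_n → 1 for every sequence {w_n} converging non-tangentially to ∞. If for some w_0 ∈ H⁺ there is a subsequence {F^{n_k}(w_0)} converging non-tangentially to ∞, then the hyperbolic step s^F is identically zero on H⁺. -/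
open Complex Metric Filter Set

/-- The upper half-plane as a subset of ℂ. -/
def UHP : Set ℂ := {w : ℂ | 0 < w.im}

/-- Poincaré distance on the upper half-plane. -/
noncomputable def pdH (w₁ w₂ : ℂ) : ℝ :=
  artanh (‖(w₂ - w₁) / (w₂ - (starRingEnd ℂ) w₁)‖)

/-- Holomorphic self-map of the upper half-plane. -/
def HolSelfUHP (F : ℂ → ℂ) : Prop :=
  DifferentiableOn ℂ F UHP ∧ MapsTo F UHP UHP

/-- A sequence in the upper half-plane converges non-tangentially to ∞. -/
def NonTangToInf (w : ℕ → ℂ) : Prop :=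
  Tendsto (fun n => ‖w n‖) atTop atTop ∧
  ∃ ε > 0, ∀ n, ε * ‖w n‖ ≤ (w n).im

/-- `F` is a parabolic holomorphic self-map of the upper half-plane with Wolff point ∞:
fixed-point-free, iterates tend to ∞ locally uniformly, and `F w / w → 1` along
sequences converging non-tangentially to ∞. -/
def ParabolicAtInf (F : ℂ → ℂ) : Prop :=
  HolSelfUHP F ∧ (∀ w ∈ UHP, F w ≠ w) ∧
  (∀ K ⊆ UHP, IsCompact K → ∀ M : ℝ,
    ∀ᶠ n in atTop, ∀ w ∈ K, M ≤ ‖F^[n] w‖) ∧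
  (∀ w : ℕ → ℂ, (∀ n, w n ∈ UHP) → NonTangToInf w →
    Tendsto (fun n => F (w n) / w n) atTop (nhds 1))

/-! ### Auxiliary lemmas -/

lemma normSq_id (z w : ℂ) :
    Complex.normSq (z - (starRingEnd ℂ) w) - Complex.normSq (z - w) = 4 * z.im * w.im := by
  simp [Complex.normSq_apply, Complex.sub_re, Complex.sub_im, Complex.conj_re, Complex.conj_im]
  ring

lemma im_sub_conj (z w : ℂ) : (z - (starRingEnd ℂ) w).im = z.im + w.im := by
  simp [Complex.sub_im, Complex.conj_im]

lemma sub_conj_ne {z w : ℂ} (hz : z ∈ UHP) (hw : w ∈ UHP) : z - (starRingEnd ℂ) w ≠ 0 := by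
  intro h
  have h2 : (z - (starRingEnd ℂ) w).im = 0 := by rw [h]; simp
  rw [im_sub_conj] at h2
  have hz' : 0 < z.im := hz
  have hw' : 0 < w.im := hw
  linarith

lemma abs_sub_lt (z w : ℂ) (hz : z ∈ UHP) (hw : w ∈ UHP) :
    ‖z - w‖ < ‖z - (starRingEnd ℂ) w‖ := by
  have h := normSq_id z w
  have hz' : 0 < z.im := hz
  have hw' : 0 < w.im := hw
  have : Complex.normSq (z - w) < Complex.normSq (z - (starRingEnd ℂ) w) := by nlinarith
  have := Real.sqrt_lt_sqrt (Complex.normSq_nonneg _) this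
  simpa [Complex.norm_def] using this

lemma ratio_lt_one (z w : ℂ) (hz : z ∈ UHP) (hw : w ∈ UHP) :
    ‖(z - w) / (z - (starRingEnd ℂ) w)‖ < 1 := by
  rw [norm_div, div_lt_one (by
    have := abs_sub_lt z w hz hw
    have := norm_nonneg (z - w)
    linarith)]
  exact abs_sub_lt z w hz hw

lemma artanh_nonneg {t : ℝ} (h0 : 0 ≤ t) (h1 : t < 1) : 0 ≤ artanh t := by
  unfold artanh
  have : (1:ℝ) ≤ (1 + t) / (1 - t) := by
    rw [le_div_iff₀ (by linarith)]; linarith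
  have := Real.log_nonneg this
  linarith

lemma artanh_mono {s t : ℝ} (h0 : 0 ≤ s) (hst : s ≤ t) (h1 : t < 1) : artanh s ≤ artanh t := by
  unfold artanh
  have h : (1 + s) / (1 - s) ≤ (1 + t) / (1 - t) := by
    rw [div_le_div_iff₀ (by linarith) (by linarith)]; nlinarith
  have := Real.log_le_log (div_pos (by linarith) (by linarith)) h
  linarith

lemma artanh_le_exp {t R : ℝ} (h0 : 0 ≤ t) (h1 : t < 1) (h : artanh t ≤ R) :
    (1 + t) / (1 - t) ≤ Real.exp (2 * R) := by
  unfold artanh at h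
  have hpos : (0:ℝ) < (1 + t) / (1 - t) := div_pos (by linarith) (by linarith)
  have : Real.log ((1 + t) / (1 - t)) ≤ 2 * R := by linarith
  calc (1 + t) / (1 - t) = Real.exp (Real.log ((1+t)/(1-t))) := (Real.exp_log hpos).symm
    _ ≤ Real.exp (2 * R) := Real.exp_le_exp.2 this

lemma artanh_cont : ContinuousAt artanh 0 := by
  unfold artanh
  apply ContinuousAt.mul continuousAt_const
  apply ContinuousAt.comp (x := (0:ℝ)) (g := Real.log)
  · exact Real.continuousAt_log (by norm_num)
  · exact ContinuousAt.div (by fun_prop) (by fun_prop) (by norm_num)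

lemma artanh_zero : artanh 0 = 0 := by unfold artanh; norm_num

lemma pdH_nonneg {z w : ℂ} (hz : z ∈ UHP) (hw : w ∈ UHP) : 0 ≤ pdH z w :=
  artanh_nonneg (norm_nonneg _) (ratio_lt_one w z hw hz)

/-! ### Möbius transformations and Schwarz–Pick -/

noncomputable def mobS (a : ℂ) (ζ : ℂ) : ℂ := (a - ζ * (starRingEnd ℂ) a) / (1 - ζ)

lemma mobS_im (a ζ : ℂ) (hζ : ζ ≠ 1) :
    (mobS a ζ).im = a.im * (1 - Complex.normSq ζ) / Complex.normSq (1 - ζ) := by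
  have hv : (1 - ζ) ≠ 0 := sub_ne_zero.2 (Ne.symm hζ)
  have hn : Complex.normSq (1 - ζ) ≠ 0 := (Complex.normSq_pos.2 hv).ne'
  unfold mobS
  rw [Complex.div_im]
  field_simp
  simp [Complex.normSq_apply, Complex.sub_re, Complex.sub_im, Complex.mul_re, Complex.mul_im,
    Complex.conj_re, Complex.conj_im, Complex.one_re, Complex.one_im]
  ring

lemma mobS_mapsTo {a : ℂ} (ha : a ∈ UHP) : MapsTo (mobS a) (ball 0 1) UHP := by
  intro ζ hζ
  have h1 : ‖ζ‖ < 1 := by simpa [mem_ball, Complex.dist_eq] using hζ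
  have hζ1 : ζ ≠ 1 := by intro h; rw [h] at h1; simp at h1
  have hns : Complex.normSq ζ < 1 := by
    have := Complex.sq_norm ζ
    nlinarith [norm_nonneg ζ]
  have hv : (1 - ζ) ≠ 0 := sub_ne_zero.2 (Ne.symm hζ1)
  have hn : 0 < Complex.normSq (1 - ζ) := Complex.normSq_pos.2 hv
  have ha' : 0 < a.im := ha
  show 0 < (mobS a ζ).im
  rw [mobS_im a ζ hζ1]
  exact div_pos (mul_pos ha' (by linarith)) hn

lemma mobS_zero (a : ℂ) : mobS a 0 = a := by unfold mobS; simp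

lemma mobS_comp {a w : ℂ} (ha : a ∈ UHP) (hw : w ∈ UHP) :
    mobS a ((w - a) / (w - (starRingEnd ℂ) a)) = w := by
  have h1 : w - (starRingEnd ℂ) a ≠ 0 := sub_conj_ne hw ha
  have h2 : a - (starRingEnd ℂ) a ≠ 0 := sub_conj_ne ha ha
  unfold mobS
  rw [div_eq_iff ?h]
  · field_simp
    ring
  case h =>
    intro h
    apply h2
    have : (1 : ℂ) - (w - a) / (w - (starRingEnd ℂ) a) = (a - (starRingEnd ℂ) a) / (w - (starRingEnd ℂ) a) := by
      field_simp
      ring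
    rw [this] at h
    have := div_eq_zero_iff.1 h
    tauto

/-- Schwarz–Pick for the upper half-plane. -/
lemma schwarz_pick_s12 {F : ℂ → ℂ} (hF : HolSelfUHP F) {z w : ℂ} (hz : z ∈ UHP) (hw : w ∈ UHP) :
    pdH (F z) (F w) ≤ pdH z w := by
  obtain ⟨hdiff, hmaps⟩ := hF
  set a := z
  set b := F z with hb
  have hbU : b ∈ UHP := hmaps hz
  set T : ℂ → ℂ := fun u => (u - b) / (u - (starRingEnd ℂ) b) with hT
  set g : ℂ → ℂ := fun ζ => T (F (mobS a ζ)) with hg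
  have hSmaps : MapsTo (mobS a) (ball 0 1) UHP := mobS_mapsTo hz
  have hgmaps : MapsTo g (ball 0 1) (ball 0 1) := by
    intro ζ hζ
    have h1 : F (mobS a ζ) ∈ UHP := hmaps (hSmaps hζ)
    have := ratio_lt_one (F (mobS a ζ)) b h1 hbU
    simpa [hg, hT, mem_ball, Complex.dist_eq] using this
  have hgdiff : DifferentiableOn ℂ g (ball 0 1) := by
    have hS : DifferentiableOn ℂ (mobS a) (ball 0 1) := by
      apply DifferentiableOn.div
      · fun_prop
      · fun_prop
      · intro ζ hζ
        have h1 : ‖ζ‖ < 1 := by simpa [mem_ball, Complex.dist_eq] using hζ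
        intro h
        rw [sub_eq_zero] at h
        rw [← h] at h1; simp at h1
    have hFS : DifferentiableOn ℂ (fun ζ => F (mobS a ζ)) (ball 0 1) :=
      hdiff.comp hS hSmaps
    apply DifferentiableOn.div
    · exact hFS.sub (differentiableOn_const _)
    · exact hFS.sub (differentiableOn_const _)
    · intro ζ hζ
      exact sub_conj_ne (hmaps (hSmaps hζ)) hbU
  have hg0 : g 0 = 0 := by
    simp only [hg, hT, mobS_zero]
    rw [← hb, sub_self, zero_div]
  set ζ₀ : ℂ := (w - a) / (w - (starRingEnd ℂ) a) with hζ₀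
  have hζ₀lt : ‖ζ₀‖ < 1 := ratio_lt_one w a hw hz
  have key := Complex.norm_le_norm_of_mapsTo_ball hgdiff (hgmaps.mono_right ball_subset_closedBall) hg0 hζ₀lt
  have hgζ : g ζ₀ = (F w - b) / (F w - (starRingEnd ℂ) b) := by
    simp only [hg, hT, hζ₀, mobS_comp hz hw]
  rw [hgζ] at key
  unfold pdH
  exact artanh_mono (norm_nonneg _) key hζ₀lt

/-! ### Geometric lemma -/

lemma geom {z w : ℂ} (hz : z ∈ UHP) (hw : w ∈ UHP) {R : ℝ} (hR : pdH z w ≤ R) :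
    w.im ≤ 4 * Real.exp (2 * R) * z.im ∧
    ‖w - z‖ ≤ (Real.exp (2 * R) - 1) * z.im := by
  set E := Real.exp (2 * R) with hE
  set t := ‖(w - z) / (w - (starRingEnd ℂ) z)‖ with htdef
  have hzim : 0 < z.im := hz
  have hwim : 0 < w.im := hw
  have hne : w - (starRingEnd ℂ) z ≠ 0 := sub_conj_ne hw hz
  have habsne : 0 < ‖w - (starRingEnd ℂ) z‖ := by
    simpa [norm_pos_iff] using hne
  have ht1 : t < 1 := ratio_lt_one w z hw hz
  have ht0 : 0 ≤ t := norm_nonneg _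
  have hRR : artanh t ≤ R := hR
  have hEt : (1 + t) / (1 - t) ≤ E := artanh_le_exp ht0 ht1 hRR
  have hEt' : 1 + t ≤ E * (1 - t) := by
    rw [div_le_iff₀ (by linarith)] at hEt; linarith
  have habs : ‖w - z‖ = t * ‖w - (starRingEnd ℂ) z‖ := by
    rw [htdef, norm_div, div_mul_cancel₀ _ habsne.ne']
  have hzz : ‖z - (starRingEnd ℂ) z‖ = 2 * z.im := by
    have : z - (starRingEnd ℂ) z = (2 * z.im : ℝ) * Complex.I := by
      rw [Complex.sub_conj]; try push_cast; try ring
    rw [this]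
    simp [Complex.norm_def, Complex.normSq_mul]
    exact hzim.le
  have htri : ‖w - (starRingEnd ℂ) z‖ ≤ ‖w - z‖ + 2 * z.im := by
    calc ‖w - (starRingEnd ℂ) z‖
        = ‖(w - z) + (z - (starRingEnd ℂ) z)‖ := by ring_nf
      _ ≤ ‖w - z‖ + ‖z - (starRingEnd ℂ) z‖ := norm_add_le _ _
      _ = ‖w - z‖ + 2 * z.im := by rw [hzz]
  constructor
  · have him : z.im + w.im ≤ ‖w - (starRingEnd ℂ) z‖ := by
      have h1 : (w - (starRingEnd ℂ) z).im = w.im + z.im := im_sub_conj w z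
      have h2 := Complex.abs_im_le_norm (w - (starRingEnd ℂ) z)
      rw [h1] at h2
      calc z.im + w.im = w.im + z.im := by ring
        _ ≤ |w.im + z.im| := le_abs_self _
        _ ≤ _ := h2
    have hsq : (1 - t^2) * Complex.normSq (w - (starRingEnd ℂ) z) = 4 * w.im * z.im := by
      have h1 : Complex.normSq (w - z) = t^2 * Complex.normSq (w - (starRingEnd ℂ) z) := by
        have := Complex.sq_norm (w - z)
        have h2 := Complex.sq_norm (w - (starRingEnd ℂ) z)
        rw [← this, ← h2, habs]; ring
      have := normSq_id w z
      nlinarith [this]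
    have hid : (1 - t^2) * (z.im + w.im)^2 ≤ 4 * w.im * z.im := by
      have h3 : (z.im + w.im)^2 ≤ Complex.normSq (w - (starRingEnd ℂ) z) := by
        rw [← Complex.sq_norm]
        exact pow_le_pow_left₀ (by positivity) him 2
      have h4 : (0:ℝ) ≤ 1 - t^2 := by nlinarith
      nlinarith [mul_le_mul_of_nonneg_left h3 h4]
    nlinarith [hid, hEt', sq_nonneg (z.im + w.im), sq_nonneg t, mul_pos hzim hwim,
      Real.exp_pos (2 * R), sq_nonneg (1 + t)]
  · have h1 : ‖w - z‖ * (1 - t) ≤ 2 * t * z.im := by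
      have := htri
      nlinarith [habs, ht0]
    have h2 : 2 * t ≤ (E - 1) * (1 - t) := by linarith
    have ht1' : 0 < 1 - t := by linarith
    nlinarith [h1, h2, hzim, norm_nonneg (w - z)]

/-! ### Step along a non-tangential sequence -/

lemma step_zero {F : ℂ → ℂ} (hmaps : MapsTo F UHP UHP) (u : ℕ → ℂ)
    (hu : ∀ k, u k ∈ UHP) {ε : ℝ} (hε : 0 < ε) (hεle : ∀ k, ε * ‖u k‖ ≤ (u k).im)
    (hlim : Tendsto (fun k => F (u k) / u k) atTop (nhds 1)) :
    Tendsto (fun k => pdH (u k) (F (u k))) atTop (nhds 0) := by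
  have hne : ∀ k, u k ≠ 0 := by
    intro k h
    have h2 : (0:ℝ) < (0:ℂ).im := h ▸ hu k
    simp at h2
  set t : ℕ → ℝ := fun k => ‖(F (u k) - u k) / (F (u k) - (starRingEnd ℂ) (u k))‖
    with htdef
  set c : ℕ → ℝ := fun k => ‖F (u k) / u k - 1‖ with hcdef
  have habspos : ∀ k, 0 < ‖u k‖ := fun k => norm_pos_iff.mpr (hne k)
  have hbound : ∀ k, t k ≤ c k / ε := by
    intro k
    have hFu : F (u k) ∈ UHP := hmaps (hu k)
    have hnum : ‖F (u k) - u k‖ = ‖u k‖ * c k := by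
      have : F (u k) - u k = u k * (F (u k) / u k - 1) := by
        rw [mul_sub, mul_div_cancel₀ _ (hne k), mul_one]
      rw [this, norm_mul]
    have hden : ε * ‖u k‖ ≤ ‖F (u k) - (starRingEnd ℂ) (u k)‖ := by
      have h1 : (F (u k) - (starRingEnd ℂ) (u k)).im = (F (u k)).im + (u k).im :=
        im_sub_conj _ _
      have h2 := Complex.abs_im_le_norm (F (u k) - (starRingEnd ℂ) (u k))
      rw [h1] at h2
      have h3 : 0 < (F (u k)).im := hFu
      calc ε * ‖u k‖ ≤ (u k).im := hεle k
        _ ≤ (F (u k)).im + (u k).im := by linarith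
        _ ≤ |(F (u k)).im + (u k).im| := le_abs_self _
        _ ≤ _ := h2
    have hdenpos : 0 < ‖F (u k) - (starRingEnd ℂ) (u k)‖ :=
      lt_of_lt_of_le (mul_pos hε (habspos k)) hden
    have hc0 : 0 ≤ c k := norm_nonneg _
    rw [htdef]
    simp only [norm_div]
    rw [div_le_div_iff₀ hdenpos hε]
    rw [hnum]
    nlinarith [hden, hc0, habspos k]
  have hc : Tendsto c atTop (nhds 0) := by
    have := tendsto_iff_norm_sub_tendsto_zero.1 hlim
    simpa [hcdef] using this
  have ht : Tendsto t atTop (nhds 0) := by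
    apply squeeze_zero (fun k => norm_nonneg _) hbound
    simpa using hc.div_const ε
  have := (artanh_cont.tendsto.comp ht)
  rw [artanh_zero] at this
  exact this

lemma iter_mem {F : ℂ → ℂ} (hmaps : MapsTo F UHP UHP) (m : ℕ) {w : ℂ} (hw : w ∈ UHP) :
    F^[m] w ∈ UHP := hmaps.iterate m hw

lemma pdH_iter {F : ℂ → ℂ} (hF : HolSelfUHP F) (m : ℕ) {z w : ℂ} (hz : z ∈ UHP) (hw : w ∈ UHP) :
    pdH (F^[m] z) (F^[m] w) ≤ pdH z w := by
  induction m with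
  | zero => simp
  | succ m ih =>
    rw [Function.iterate_succ_apply', Function.iterate_succ_apply']
    exact le_trans (schwarz_pick_s12 hF (iter_mem hF.2 m hz) (iter_mem hF.2 m hw)) ih

theorem stmt12 (F : ℂ → ℂ) (hF : ParabolicAtInf F)
    (w₀ : ℂ) (hw₀ : w₀ ∈ UHP) (n : ℕ → ℕ) (hn : StrictMono n)
    (hnt : NonTangToInf (fun k => F^[n k] w₀)) :
    ∀ w ∈ UHP, Tendsto (fun m => pdH (F^[m] w) (F^[m+1] w)) atTop (nhds 0) := by
  intro w hw
  obtain ⟨hH, _, _, hpar⟩ := hF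
  have hmaps : MapsTo F UHP UHP := hH.2
  obtain ⟨hinf, ε, hε, hεle⟩ := hnt
  set u : ℕ → ℂ := fun k => F^[n k] w₀ with hu_def
  set v : ℕ → ℂ := fun k => F^[n k] w with hv_def
  have hu : ∀ k, u k ∈ UHP := fun k => iter_mem hmaps (n k) hw₀
  have hv : ∀ k, v k ∈ UHP := fun k => iter_mem hmaps (n k) hw
  set R : ℝ := pdH w w₀ with hR_def
  have hR0 : 0 ≤ R := pdH_nonneg hw hw₀
  set E : ℝ := Real.exp (2 * R) with hE_def
  have hE1 : 1 ≤ E := by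
    rw [hE_def]
    calc (1:ℝ) = Real.exp 0 := Real.exp_zero.symm
      _ ≤ _ := Real.exp_le_exp.2 (by linarith)
  have hgeom : ∀ k, (u k).im ≤ 4 * E * (v k).im ∧
      ‖u k - v k‖ ≤ (E - 1) * (v k).im := by
    intro k
    exact geom (hv k) (hu k) (pdH_iter hH (n k) hw hw₀)
  -- v converges non-tangentially to ∞
  have hvim : ∀ k, ε * ‖u k‖ / (4 * E) ≤ (v k).im := by
    intro k
    have h1 := (hgeom k).1
    have h2 := hεle k
    rw [div_le_iff₀ (by linarith)]
    nlinarith [(hv k : 0 < (v k).im)]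
  have hvabs : Tendsto (fun k => ‖v k‖) atTop atTop := by
    have haux : Tendsto (fun k => ε * ‖u k‖ / (4 * E)) atTop atTop :=
      Tendsto.atTop_div_const (by nlinarith) (Tendsto.const_mul_atTop hε hinf)
    apply tendsto_atTop_mono ?_ haux
    intro k
    calc ε * ‖u k‖ / (4 * E) ≤ (v k).im := hvim k
      _ ≤ |(v k).im| := le_abs_self _
      _ ≤ ‖v k‖ := Complex.abs_im_le_norm _
  set ε' : ℝ := ε / (4 * E + ε * (E - 1)) with hε'_def
  have hden : 0 < 4 * E + ε * (E - 1) := by nlinarith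
  have hε' : 0 < ε' := div_pos hε hden
  have hε'le : ∀ k, ε' * ‖v k‖ ≤ (v k).im := by
    intro k
    have h1 := (hgeom k).2
    have h2 := hvim k
    have h3 : ‖v k‖ ≤ ‖u k‖ + (E - 1) * (v k).im := by
      have e1 : v k = u k - (u k - v k) := by ring
      calc ‖v k‖ = ‖u k - (u k - v k)‖ := by rw [← e1]
        _ ≤ ‖u k‖ + ‖u k - v k‖ := norm_sub_le _ _
        _ ≤ ‖u k‖ + (E - 1) * (v k).im := by linarith
    rw [hε'_def, div_mul_eq_mul_div, div_le_iff₀ hden]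
    have h4 : ε * ‖u k‖ ≤ 4 * E * (v k).im := by
      rw [div_le_iff₀ (by linarith)] at h2; linarith
    nlinarith [(hv k : 0 < (v k).im)]
  -- apply parabolicity along v
  have hlim : Tendsto (fun k => F (v k) / v k) atTop (nhds 1) :=
    hpar v hv ⟨hvabs, ε', hε', hε'le⟩
  have hstep : Tendsto (fun k => pdH (v k) (F (v k))) atTop (nhds 0) :=
    step_zero hmaps v hv hε' hε'le hlim
  -- the step sequence is antitone
  set s : ℕ → ℝ := fun m => pdH (F^[m] w) (F^[m+1] w) with hs_def
  have hs_anti : Antitone s := by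
    apply antitone_nat_of_succ_le
    intro m
    have h1 : F^[m+1] w = F (F^[m] w) := Function.iterate_succ_apply' F m w
    have h2 : F^[m+2] w = F (F^[m+1] w) := Function.iterate_succ_apply' F (m+1) w
    show pdH (F^[m+1] w) (F^[m+1+1] w) ≤ pdH (F^[m] w) (F^[m+1] w)
    have key := schwarz_pick_s12 hH (iter_mem hmaps m hw) (iter_mem hmaps (m+1) hw)
    rw [← h1, ← h2] at key
    exact key
  have hs_nonneg : ∀ m, 0 ≤ s m := fun m =>
    pdH_nonneg (iter_mem hmaps m hw) (iter_mem hmaps (m+1) hw)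
  have hs_sub : ∀ k, s (n k) = pdH (v k) (F (v k)) := by
    intro k
    rw [hs_def]
    simp only
    rw [Function.iterate_succ_apply' F (n k) w]
  -- conclude
  rw [Metric.tendsto_atTop]
  intro δ hδ
  have : ∀ᶠ k in atTop, pdH (v k) (F (v k)) < δ := by
    have := Metric.tendsto_atTop.1 hstep δ hδ
    obtain ⟨N, hN⟩ := this
    filter_upwards [eventually_ge_atTop N] with k hk
    have := hN k hk
    rw [Real.dist_eq, sub_zero, _root_.abs_of_nonneg (pdH_nonneg (hv k) (hmaps (hv k)))] at this
    exact this
  obtain ⟨k₀, hk₀⟩ := this.exists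
  refine ⟨n k₀, fun m hm => ?_⟩
  have h1 : s m ≤ s (n k₀) := hs_anti hm
  rw [hs_sub k₀] at h1
  rw [Real.dist_eq, sub_zero, _root_.abs_of_nonneg (hs_nonneg m)]
  exact lt_of_le_of_lt h1 hk₀
end
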